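/- arXiv:1110.1057 — 7 statements merged into one kernel-verified Lean document; each statement's English description precedes it below -/
import Mathlib

section
/- If ν is a Bessel measure for a Borel probability measure μ on ℝ^d (with Bessel bound B), then there exists a constant C > 0 such that ν(K) ≤ C · max{1, (diam K)^d} for every compact set K ⊂ ℝ^d; in particular, ν is σ-finite. -/
open MeasureTheory Filter Metric Complex Set
open scoped ENNReal NNReal Real Topology

noncomputable section

/-- Euclidean space `ℝ^d`. -/
abbrev Ed (d : ℕ) := EuclideanSpace ℝ (Fin d)

/-- The Fourier transform of the measure `f dμ`:
`(f dμ)^(t) = ∫ f(x) e^{-2πi t·x} dμ(x)`. -/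
def ftm {d : ℕ} (μ : Measure (Ed d)) (f : Ed d → ℂ) (t : Ed d) : ℂ :=
  ∫ x, f x * Complex.exp (-(2 * Real.pi * (inner ℝ t x : ℝ)) * Complex.I) ∂μ

/-- `ν` is a Bessel measure for `μ` with bound `B`:
`∫ |(f dμ)^(t)|² dν(t) ≤ B ‖f‖²_{L²(μ)}` for all `f ∈ L²(μ)`. -/
def IsBesselBound {d : ℕ} (μ ν : Measure (Ed d)) (B : ℝ) : Prop :=
  ∀ f : Ed d → ℂ, MemLp f 2 μ →
    ∫⁻ t, (‖ftm μ f t‖₊ : ℝ≥0∞) ^ 2 ∂ν ≤ ENNReal.ofReal B * ∫⁻ x, (‖f x‖₊ : ℝ≥0∞) ^ 2 ∂μ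

/-- `ν` is a frame measure for `μ` with bounds `A, B`:
`A ‖f‖²_{L²(μ)} ≤ ∫ |(f dμ)^(t)|² dν(t) ≤ B ‖f‖²_{L²(μ)}` for all `f ∈ L²(μ)`. -/
def IsFrameBounds {d : ℕ} (μ ν : Measure (Ed d)) (A B : ℝ) : Prop :=
  ∀ f : Ed d → ℂ, MemLp f 2 μ →
    ENNReal.ofReal A * ∫⁻ x, (‖f x‖₊ : ℝ≥0∞) ^ 2 ∂μ ≤ ∫⁻ t, (‖ftm μ f t‖₊ : ℝ≥0∞) ^ 2 ∂ν ∧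
    ∫⁻ t, (‖ftm μ f t‖₊ : ℝ≥0∞) ^ 2 ∂ν ≤ ENNReal.ofReal B * ∫⁻ x, (‖f x‖₊ : ℝ≥0∞) ^ 2 ∂μ

/-- The cube `x + R·Q` where `Q = [0,1)^d`. -/
def cube {d : ℕ} (x : Ed d) (R : ℝ) : Set (Ed d) := {y | ∀ i, y i ∈ Set.Ico (x i) (x i + R)}

/-- The `α`-upper Beurling density `D_α(ν) = limsup_{R→∞} sup_x ν(x+RQ)/R^α`. -/
def beurlingDensity {d : ℕ} (ν : Measure (Ed d)) (α : ℝ) : ℝ≥0∞ :=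
  limsup (fun R : ℝ => ⨆ x : Ed d, ν (cube x R) / ENNReal.ofReal (R ^ α)) atTop

/-- The upper Beurling dimension `dim ν = sup {α ≥ 0 : D_α(ν) = ∞}`. -/
def beurlingDim {d : ℕ} (ν : Measure (Ed d)) : ℝ≥0∞ :=
  ⨆ (α : ℝ) (_ : 0 ≤ α) (_ : beurlingDensity ν α = ∞), ENNReal.ofReal α

/-- The `d`-lower Beurling density `D⁻(ν) = liminf_{R→∞} inf_x ν(x+RQ)/R^d`. -/
def lowerBeurlingDensity {d : ℕ} (ν : Measure (Ed d)) : ℝ≥0∞ :=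
  liminf (fun R : ℝ => ⨅ x : Ed d, ν (cube x R) / ENNReal.ofReal (R ^ (d : ℝ))) atTop

lemma aux_coord_dist {d : ℕ} (y x : Ed d) (i : Fin d) : dist (y i) (x i) ≤ dist y x := by
  rw [EuclideanSpace.dist_eq]
  have h1 : dist (y i) (x i) ^ 2 ≤ ∑ j, dist (y j) (x j) ^ 2 :=
    Finset.single_le_sum (f := fun j => dist (y j) (x j) ^ 2)
      (fun j _ => sq_nonneg _) (Finset.mem_univ i)
  calc dist (y i) (x i) = Real.sqrt (dist (y i) (x i) ^ 2) := (Real.sqrt_sq dist_nonneg).symm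
    _ ≤ _ := Real.sqrt_le_sqrt h1


lemma aux_cover {d : ℕ} (ν : Measure (Ed d)) (r : ℝ) (hr : 0 < r) (c : ℝ≥0∞)
    (hball : ∀ t₀ : Ed d, ν (Metric.ball t₀ r) ≤ c) (K : Set (Ed d)) (hK : IsCompact K) :
    ν K ≤ ((2 * (⌈Metric.diam K / (r / (2 * Real.sqrt d + 1))⌉₊ + 1) + 1 : ℕ)) ^ d * c := by
  rcases K.eq_empty_or_nonempty with hKe | ⟨x₀, hx₀⟩
  · simp [hKe]
  set s : ℝ := r / (2 * Real.sqrt d + 1) with hs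
  have hsd : 0 ≤ Real.sqrt d := Real.sqrt_nonneg _
  have hspos : 0 < s := div_pos hr (by linarith)
  set D : ℝ := Metric.diam K with hD
  have hDnn : 0 ≤ D := Metric.diam_nonneg
  set M : ℕ := ⌈D / s⌉₊ + 1 with hM
  have hDsM : D / s ≤ (M : ℝ) := by
    rw [hM]; push_cast
    calc D / s ≤ (⌈D / s⌉₊ : ℝ) := Nat.le_ceil _
      _ ≤ (⌈D / s⌉₊ : ℝ) + 1 := by linarith
  set T : Finset (Fin d → ℤ) := Fintype.piFinset fun _ => Finset.Icc (-(M:ℤ)) M with hT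
  set ctr : (Fin d → ℤ) → Ed d :=
    fun z => (WithLp.equiv 2 (Fin d → ℝ)).symm fun i => x₀ i + s * (z i : ℝ) with hctr
  have hcov : K ⊆ ⋃ z ∈ T, Metric.ball (ctr z) r := by
    intro y hy
    have hyd : ∀ i, |y i - x₀ i| ≤ D := by
      intro i
      have h1 := aux_coord_dist y x₀ i
      have h2 : dist y x₀ ≤ D := Metric.dist_le_diam_of_mem hK.isBounded hy hx₀
      rw [Real.dist_eq] at h1
      linarith
    set z : Fin d → ℤ := fun i => ⌊(y i - x₀ i) / s⌋ with hz
    have hceil : D / s ≤ (⌈D / s⌉₊ : ℝ) := Nat.le_ceil _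
    have hMr : (M : ℝ) = (⌈D / s⌉₊ : ℝ) + 1 := by rw [hM]; push_cast; ring
    have hzmem : z ∈ T := by
      rw [hT, Fintype.mem_piFinset]
      intro i
      rw [Finset.mem_Icc]
      have hle := abs_le.1 (hyd i)
      have h1 : (y i - x₀ i) / s ≤ D / s := by gcongr; exact hle.2
      have h2 : -(D / s) ≤ (y i - x₀ i) / s := by
        rw [← neg_div]
        gcongr
        exact hle.1
      constructor
      · have : (-(M:ℝ) : ℝ) ≤ (z i : ℝ) := by
          have hfl2 := Int.sub_one_lt_floor ((y i - x₀ i) / s)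
          linarith
        exact_mod_cast this
      · have : (z i : ℝ) ≤ (M : ℝ) := by
          have hfl := Int.floor_le ((y i - x₀ i) / s)
          linarith
        exact_mod_cast this
    refine Set.mem_biUnion hzmem ?_
    rw [Metric.mem_ball, EuclideanSpace.dist_eq]
    have hcoordb : ∀ i, dist (y i) (ctr z i) ≤ s := by
      intro i
      have h1 : ctr z i = x₀ i + s * (z i : ℝ) := rfl
      rw [Real.dist_eq, h1]
      have hfl := Int.floor_le ((y i - x₀ i) / s)
      have hfl2 := Int.sub_one_lt_floor ((y i - x₀ i) / s)
      rw [abs_le]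
      have h2 : s * ((y i - x₀ i) / s - 1) ≤ s * (z i : ℝ) :=
        mul_le_mul_of_nonneg_left hfl2.le hspos.le
      have h3 : s * (z i : ℝ) ≤ s * ((y i - x₀ i) / s) :=
        mul_le_mul_of_nonneg_left hfl hspos.le
      rw [mul_sub, mul_div_cancel₀ _ hspos.ne'] at h2
      rw [mul_div_cancel₀ _ hspos.ne'] at h3
      constructor <;> [skip; skip] <;> linarith
    have hsum : ∑ i, dist (y i) (ctr z i) ^ 2 ≤ (d : ℝ) * s ^ 2 := by
      calc ∑ i, dist (y i) (ctr z i) ^ 2 ≤ ∑ _i : Fin d, s ^ 2 := by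
            apply Finset.sum_le_sum
            intro i _
            exact pow_le_pow_left₀ dist_nonneg (hcoordb i) 2
        _ = (d : ℝ) * s ^ 2 := by simp [mul_comm]
    calc Real.sqrt (∑ i, dist (y i) (ctr z i) ^ 2) ≤ Real.sqrt ((d:ℝ) * s ^ 2) :=
          Real.sqrt_le_sqrt hsum
      _ = Real.sqrt d * s := by
          rw [Real.sqrt_mul (Nat.cast_nonneg d), Real.sqrt_sq hspos.le]
      _ < r := by
          rw [hs, ← mul_div_assoc, div_lt_iff₀ (by linarith : (0:ℝ) < 2 * Real.sqrt d + 1)]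
          nlinarith
  have hcard : T.card = (2 * M + 1) ^ d := by
    rw [hT, Fintype.card_piFinset]
    have h1 : (Finset.Icc (-(M:ℤ)) M).card = 2 * M + 1 := by
      rw [Int.card_Icc]; omega
    rw [Finset.prod_congr rfl fun i _ => h1]
    simp
  calc ν K ≤ ν (⋃ z ∈ T, Metric.ball (ctr z) r) := measure_mono hcov
    _ ≤ ∑ z ∈ T, ν (Metric.ball (ctr z) r) := measure_biUnion_finset_le _ _
    _ ≤ ∑ _z ∈ T, c := Finset.sum_le_sum fun z _ => hball (ctr z)
    _ = T.card * c := by rw [Finset.sum_const, nsmul_eq_mul]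
    _ = ((2 * (⌈D / s⌉₊ + 1) + 1 : ℕ)) ^ d * c := by rw [hcard, hM]; push_cast; ring

lemma aux_max_pow (d : ℕ) (D : ℝ) (hD : 0 ≤ D) : (max 1 D) ^ d = max 1 (D ^ d) := by
  rcases le_total D 1 with h | h
  · rw [max_eq_left h, one_pow, max_eq_left (pow_le_one₀ hD h)]
  · rw [max_eq_right h, max_eq_right (one_le_pow₀ h)]


set_option maxHeartbeats 2000000 in
lemma aux_ball_bound {d : ℕ} (μ ν : Measure (Ed d)) [IsProbabilityMeasure μ]
    (B : ℝ) (hν : IsBesselBound μ ν B) :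
    ∃ r > (0:ℝ), ∀ t₀ : Ed d, ν (Metric.ball t₀ r) ≤ ENNReal.ofReal (4 * B) := by
  set F : Ed d → ℂ := fun t => ∫ x, Complex.exp (-(2 * Real.pi * (inner ℝ t x : ℝ)) * Complex.I) ∂μ
    with hFdef
  have hcont : ∀ x : Ed d,
      Continuous fun t : Ed d => Complex.exp (-(2 * Real.pi * (inner ℝ t x : ℝ)) * Complex.I) := by
    intro x
    exact Complex.continuous_exp.comp
      ((((continuous_const.mul (Complex.continuous_ofReal.comp
        (continuous_id.inner continuous_const)))).neg).mul continuous_const)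
  have hcont' : ∀ t : Ed d,
      Continuous fun x : Ed d => Complex.exp (-(2 * Real.pi * (inner ℝ t x : ℝ)) * Complex.I) := by
    intro t
    exact Complex.continuous_exp.comp
      ((((continuous_const.mul (Complex.continuous_ofReal.comp
        (continuous_const.inner continuous_id)))).neg).mul continuous_const)
  have hnorm : ∀ (r : ℝ), ‖Complex.exp ((r:ℂ) * Complex.I)‖ = 1 := fun r => by
    rw [Complex.norm_exp_ofReal_mul_I]
  have hnorm' : ∀ (t x : Ed d),
      ‖Complex.exp (-(2 * Real.pi * (inner ℝ t x : ℝ)) * Complex.I)‖ = 1 := by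
    intro t x
    have := hnorm (-(2 * Real.pi * (inner ℝ t x : ℝ)))
    simpa using this
  have hFtendsto : Tendsto F (𝓝 0) (𝓝 1) := by
    have h1 : (1 : ℂ) = ∫ _x, (1:ℂ) ∂μ := by simp
    rw [h1]
    apply tendsto_integral_filter_of_dominated_convergence (bound := fun _ => (1:ℝ))
    · exact Eventually.of_forall fun t => (hcont' t).aestronglyMeasurable
    · exact Eventually.of_forall fun t => ae_of_all _ fun x => le_of_eq (hnorm' t x)
    · exact integrable_const 1
    · refine ae_of_all _ fun x => ?_
      have := ((hcont x).tendsto 0)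
      simpa using this
  have hev : ∀ᶠ t in 𝓝 (0 : Ed d), 1/2 < ‖F t‖ := by
    have h : Tendsto (fun t => ‖F t‖) (𝓝 0) (𝓝 1) := by simpa using hFtendsto.norm
    exact h (eventually_gt_nhds (by norm_num))
  rw [Metric.eventually_nhds_iff] at hev
  obtain ⟨r, hr, hball⟩ := hev
  refine ⟨r, hr, fun t₀ => ?_⟩
  set f : Ed d → ℂ := fun x => Complex.exp ((2 * Real.pi * (inner ℝ t₀ x : ℝ)) * Complex.I)
    with hfdef
  have hfcont : Continuous f :=
    Complex.continuous_exp.comp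
      ((continuous_const.mul (Complex.continuous_ofReal.comp
        (continuous_const.inner continuous_id))).mul continuous_const)
  have hfnorm : ∀ x, ‖f x‖ = 1 := by
    intro x
    have := hnorm (2 * Real.pi * (inner ℝ t₀ x : ℝ))
    push_cast at this
    exact this
  have hfmem : MemLp f 2 μ :=
    MemLp.of_bound hfcont.aestronglyMeasurable 1 (ae_of_all _ fun x => (hfnorm x).le)
  have hkey : ∀ t, ftm μ f t = F (t - t₀) := by
    intro t
    unfold ftm
    rw [hFdef]
    congr 1
    funext x
    rw [← Complex.exp_add]
    congr 1
    have : (inner ℝ (t - t₀) x : ℝ) = (inner ℝ t x : ℝ) - (inner ℝ t₀ x : ℝ) := inner_sub_left _ _ _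
    rw [this]
    push_cast
    ring
  have hrhs : ∫⁻ x, ((‖f x‖₊ : ℝ≥0∞)) ^ 2 ∂μ = 1 := by
    have : ∀ x, ((‖f x‖₊ : ℝ≥0∞)) ^ 2 = 1 := by
      intro x
      have : ‖f x‖₊ = 1 := by
        ext
        simpa using hfnorm x
      simp [this]
    simp only [this]
    simp
  have hB1 : ∫⁻ t, ((‖ftm μ f t‖₊ : ℝ≥0∞)) ^ 2 ∂ν ≤ ENNReal.ofReal B := by
    have := hν f hfmem
    rwa [hrhs, mul_one] at this
  have hlow : ENNReal.ofReal (1/4) * ν (Metric.ball t₀ r) ≤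
      ∫⁻ t, ((‖ftm μ f t‖₊ : ℝ≥0∞)) ^ 2 ∂ν := by
    have h1 : ENNReal.ofReal (1/4) * ν (Metric.ball t₀ r)
        = ∫⁻ _t in Metric.ball t₀ r, ENNReal.ofReal (1/4) ∂ν := by
      rw [setLIntegral_const, mul_comm]
    rw [h1]
    refine le_trans (setLIntegral_mono' measurableSet_ball fun t ht => ?_)
      (setLIntegral_le_lintegral _ _)
    have hdist : dist (t - t₀) (0 : Ed d) < r := by
      rw [dist_zero_right, ← dist_eq_norm]
      exact ht
    have h2 : (1/2 : ℝ) ≤ ‖ftm μ f t‖ := by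
      rw [hkey t]
      exact (hball hdist).le
    have h3 : ENNReal.ofReal (1/2) ≤ (‖ftm μ f t‖₊ : ℝ≥0∞) := by
      rw [← ENNReal.ofReal_coe_nnreal, coe_nnnorm]
      exact ENNReal.ofReal_le_ofReal h2
    calc ENNReal.ofReal (1/4) = ENNReal.ofReal (1/2) ^ 2 := by
          rw [← ENNReal.ofReal_pow (by norm_num)]; norm_num
      _ ≤ (‖ftm μ f t‖₊ : ℝ≥0∞) ^ 2 := pow_le_pow_left' h3 2
  calc ν (Metric.ball t₀ r)
      = (ENNReal.ofReal 4 * ENNReal.ofReal (1/4)) * ν (Metric.ball t₀ r) := by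
        rw [← ENNReal.ofReal_mul (by norm_num)]; norm_num
    _ = ENNReal.ofReal 4 * (ENNReal.ofReal (1/4) * ν (Metric.ball t₀ r)) := mul_assoc _ _ _
    _ ≤ ENNReal.ofReal 4 * ENNReal.ofReal B :=
        mul_le_mul_right (hlow.trans hB1) _
    _ = ENNReal.ofReal (4 * B) := (ENNReal.ofReal_mul (by norm_num)).symm

/-- If `ν` is a Bessel measure for a Borel probability measure `μ` on `ℝ^d`, then there is a
constant `C > 0` with `ν(K) ≤ C · max{1, (diam K)^d}` for every compact `K`; in particular `ν`
is σ-finite. -/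
theorem stmt0 {d : ℕ} (μ ν : Measure (Ed d)) [IsProbabilityMeasure μ]
    (B : ℝ) (hB : 0 < B) (hν : IsBesselBound μ ν B) :
    (∃ C > (0 : ℝ), ∀ K : Set (Ed d), IsCompact K →
      ν K ≤ ENNReal.ofReal (C * max 1 (Metric.diam K ^ d))) ∧ SigmaFinite ν := by
  obtain ⟨r, hr, hball⟩ := aux_ball_bound μ ν B hν
  have hcover : ∀ K : Set (Ed d), IsCompact K →
      ν K ≤ ((2 * (⌈Metric.diam K / (r / (2 * Real.sqrt d + 1))⌉₊ + 1) + 1 : ℕ)) ^ d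
        * ENNReal.ofReal (4 * B) :=
    fun K hK => aux_cover ν r hr _ hball K hK
  set s : ℝ := r / (2 * Real.sqrt d + 1) with hs
  have hsd : 0 ≤ Real.sqrt d := Real.sqrt_nonneg _
  have hspos : 0 < s := div_pos hr (by linarith)
  set C : ℝ := (2 / s + 5) ^ d * (4 * B) with hC
  have hCpos : 0 < C := by positivity
  have main : ∀ K : Set (Ed d), IsCompact K →
      ν K ≤ ENNReal.ofReal (C * max 1 (Metric.diam K ^ d)) := by
    intro K hK
    refine (hcover K hK).trans ?_
    set D : ℝ := Metric.diam K with hD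
    have hDnn : 0 ≤ D := Metric.diam_nonneg
    set n : ℕ := 2 * (⌈D / s⌉₊ + 1) + 1 with hn
    have hcast : ((n : ℕ) : ℝ≥0∞) ^ d * ENNReal.ofReal (4 * B)
        = ENNReal.ofReal ((n : ℝ) ^ d * (4 * B)) := by
      rw [← ENNReal.ofReal_natCast n, ← ENNReal.ofReal_pow (Nat.cast_nonneg n),
        ← ENNReal.ofReal_mul (by positivity)]
    rw [hcast]
    apply ENNReal.ofReal_le_ofReal
    have h1 : (n : ℝ) ≤ (2 / s + 5) * max 1 D := by
      have hceil : (⌈D / s⌉₊ : ℝ) < D / s + 1 :=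
        Nat.ceil_lt_add_one (div_nonneg hDnn hspos.le)
      have hmax1 : (1 : ℝ) ≤ max 1 D := le_max_left _ _
      have hmaxD : D ≤ max 1 D := le_max_right _ _
      have h2s : (0 : ℝ) < 2 / s := by positivity
      have hds : D / s = (1 / s) * D := by ring
      have : (n : ℝ) = 2 * (⌈D / s⌉₊ : ℝ) + 3 := by rw [hn]; push_cast; ring
      rw [this]
      have hDs : D / s ≤ (1 / s) * max 1 D := by
        rw [hds]
        exact mul_le_mul_of_nonneg_left hmaxD (by positivity)
      have e1 : 2 / s * max 1 D = 2 * (1 / s * max 1 D) := by ring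
      have e2 : (5:ℝ) ≤ 5 * max 1 D := by linarith
      linarith
    calc (n : ℝ) ^ d * (4 * B)
        ≤ ((2 / s + 5) * max 1 D) ^ d * (4 * B) := by
          apply mul_le_mul_of_nonneg_right (pow_le_pow_left₀ (by positivity) h1 d) (by positivity)
      _ = (2 / s + 5) ^ d * max 1 (D ^ d) * (4 * B) := by
          rw [mul_pow, aux_max_pow d D hDnn]
      _ = C * max 1 (D ^ d) := by rw [hC]; ring
  refine ⟨⟨C, hCpos, main⟩, ?_⟩
  refine Measure.sigmaFinite_of_countable
    (countable_range fun n : ℕ => Metric.closedBall (0 : Ed d) n) ?_ ?_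
  · rintro t ⟨n, rfl⟩
    exact (main _ (isCompact_closedBall _ _)).trans_lt ENNReal.ofReal_lt_top
  · rw [sUnion_range]
    ext x
    simp only [mem_iUnion, Metric.mem_closedBall, mem_univ, iff_true]
    obtain ⟨n, hn⟩ := exists_nat_ge (dist x 0)
    exact ⟨n, hn⟩
end
end

section
/- Fix constants A, B > 0 and a Borel probability measure μ on ℝ^d. The set of Bessel measures for μ with bound B and the set of frame measures for μ with bounds A, B are each convex (if ν₁, ν₂ belong to the set and 0 ≤ t ≤ 1, then tν₁ + (1−t)ν₂ belongs to it) and closed under convolution with Borel probability measures (if ν belongs to the set and ρ is any Borel probability measure on ℝ^d, then ν∗ρ belongs to it). -/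
open MeasureTheory Filter Metric Complex Set
open scoped ENNReal NNReal Real Topology

noncomputable section

namespace Stmt2Aux
variable {d : ℕ}

lemma norm_char (t x : Ed d) :
    ‖Complex.exp (-(2 * Real.pi * (inner ℝ t x : ℝ)) * Complex.I)‖ = 1 := by
  have h : (-(2 * Real.pi * ((inner ℝ t x : ℝ) : ℂ)) * Complex.I)
      = ((-(2 * Real.pi * (inner ℝ t x : ℝ)) : ℝ) : ℂ) * Complex.I := by push_cast; ring
  rw [h, Complex.norm_exp_ofReal_mul_I]

lemma continuous_char (t : Ed d) :
    Continuous fun x : Ed d => Complex.exp (-(2 * Real.pi * (inner ℝ t x : ℝ)) * Complex.I) := by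
  have h : Continuous fun x : Ed d => (inner ℝ t x : ℝ) := continuous_const.inner continuous_id
  exact Complex.continuous_exp.comp
    (((continuous_const.mul (Complex.continuous_ofReal.comp h)).neg).mul continuous_const)

lemma continuous_char' (x : Ed d) :
    Continuous fun t : Ed d => Complex.exp (-(2 * Real.pi * (inner ℝ t x : ℝ)) * Complex.I) := by
  have h : Continuous fun t : Ed d => (inner ℝ t x : ℝ) := continuous_id.inner continuous_const
  exact Complex.continuous_exp.comp
    (((continuous_const.mul (Complex.continuous_ofReal.comp h)).neg).mul continuous_const)

lemma continuous_ftm (μ : Measure (Ed d)) (f : Ed d → ℂ) (hf : Integrable f μ) :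
    Continuous (ftm μ f) := by
  apply continuous_of_dominated
    (F := fun t x => f x * Complex.exp (-(2 * Real.pi * (inner ℝ t x : ℝ)) * Complex.I))
    (bound := fun x => ‖f x‖)
  · exact fun t => hf.aestronglyMeasurable.mul (continuous_char t).aestronglyMeasurable
  · intro t
    filter_upwards with x
    rw [norm_mul, norm_char, mul_one]
  · exact hf.norm
  · filter_upwards with x
    exact continuous_const.mul (continuous_char' x)


lemma ftm_add (μ : Measure (Ed d)) (f : Ed d → ℂ) (x y : Ed d) :
    ftm μ f (x + y)
      = ftm μ (fun z => f z * Complex.exp (-(2 * Real.pi * (inner ℝ y z : ℝ)) * Complex.I)) x := by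
  unfold ftm
  refine integral_congr_ae (Eventually.of_forall fun z => ?_)
  simp only []
  rw [mul_assoc (f z), ← Complex.exp_add]
  congr 1
  have h : (inner ℝ (x + y) z : ℝ) = (inner ℝ x z : ℝ) + (inner ℝ y z : ℝ) := inner_add_left x y z
  rw [h]; push_cast; ring

lemma memLp_mul_char (μ : Measure (Ed d)) [IsFiniteMeasure μ] {f : Ed d → ℂ}
    (hf : MemLp f 2 μ) (y : Ed d) :
    MemLp (fun z => f z * Complex.exp (-(2 * Real.pi * (inner ℝ y z : ℝ)) * Complex.I)) 2 μ := by
  refine MemLp.of_le hf (hf.aestronglyMeasurable.mul (continuous_char y).aestronglyMeasurable) ?_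
  filter_upwards with z
  rw [norm_mul, norm_char, mul_one]

lemma lintegral_mul_char (μ : Measure (Ed d)) (f : Ed d → ℂ) (y : Ed d) :
    ∫⁻ z, (‖f z * Complex.exp (-(2 * Real.pi * (inner ℝ y z : ℝ)) * Complex.I)‖₊ : ℝ≥0∞) ^ 2 ∂μ
      = ∫⁻ z, (‖f z‖₊ : ℝ≥0∞) ^ 2 ∂μ := by
  refine lintegral_congr fun z => ?_
  congr 2
  ext
  rw [coe_nnnorm, coe_nnnorm, norm_mul, norm_char, mul_one]

lemma ftm_one_zero (μ : Measure (Ed d)) [IsProbabilityMeasure μ] :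
    ftm μ (fun _ => 1) 0 = 1 := by
  unfold ftm
  simp [inner_zero_left]

lemma sq_nnnorm_eq (z : ℂ) : (‖z‖₊ : ℝ≥0∞) ^ 2 = ENNReal.ofReal (‖z‖ ^ 2) := by
  rw [ENNReal.ofReal_pow (norm_nonneg z), ofReal_norm, enorm_eq_nnnorm]


lemma bessel_sfinite {μ ν : Measure (Ed d)} [IsProbabilityMeasure μ] {B : ℝ}
    (h : IsBesselBound μ ν B) : SFinite ν := by
  -- continuity of the Fourier transform of μ
  have hcont : Continuous (ftm μ (fun _ => (1 : ℂ))) :=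
    continuous_ftm μ _ (integrable_const 1)
  have h0 : ftm μ (fun _ => (1 : ℂ)) 0 = 1 := ftm_one_zero μ
  -- choose ε with ‖F t‖ ≥ 1/2 on ball 0 ε
  obtain ⟨ε, hε, hball⟩ := Metric.continuousAt_iff.mp (hcont.continuousAt (x := 0))
    (1/2) (by norm_num)
  have hFlow : ∀ t : Ed d, dist t 0 < ε → (1/2 : ℝ) ≤ ‖ftm μ (fun _ => (1 : ℂ)) t‖ := by
    intro t ht
    have := hball ht
    rw [h0, dist_eq_norm] at this
    have h1 : ‖(1 : ℂ)‖ - ‖ftm μ (fun _ => (1 : ℂ)) t - 1‖ ≤ ‖ftm μ (fun _ => (1 : ℂ)) t‖ := by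
      have := norm_sub_norm_le (1 : ℂ) (1 - ftm μ (fun _ => (1 : ℂ)) t)
      simpa [norm_sub_rev] using norm_sub_norm_le ((1:ℂ)) (1 - ftm μ (fun _ => (1:ℂ)) t)
    simp only [norm_one] at h1
    linarith
  -- each ball of radius ε has measure ≤ 4B
  have hballs : ∀ u : Ed d, ν (Metric.ball u ε) ≤ 4 * ENNReal.ofReal B := by
    intro u
    set g : Ed d → ℂ := fun z => (1 : ℂ) *
      Complex.exp (-(2 * Real.pi * (inner ℝ (-u) z : ℝ)) * Complex.I) with hg
    have hgm : MemLp g 2 μ := memLp_mul_char μ (memLp_const 1) (-u)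
    have hkey : ∀ t : Ed d, ftm μ g t = ftm μ (fun _ => (1 : ℂ)) (t + -u) := by
      intro t
      rw [ftm_add μ (fun _ => (1 : ℂ)) t (-u)]
    have hb := h g hgm
    rw [lintegral_mul_char μ (fun _ => (1 : ℂ)) (-u)] at hb
    simp only [nnnorm_one, ENNReal.coe_one, one_pow, lintegral_one, measure_univ, mul_one] at hb
    have hlow : ENNReal.ofReal ((1/2)^2) * ν (Metric.ball u ε)
        ≤ ∫⁻ t, (‖ftm μ g t‖₊ : ℝ≥0∞) ^ 2 ∂ν := by
      have hsub : ∫⁻ t in Metric.ball u ε, (‖ftm μ g t‖₊ : ℝ≥0∞) ^ 2 ∂ν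
          ≤ ∫⁻ t, (‖ftm μ g t‖₊ : ℝ≥0∞) ^ 2 ∂ν := setLIntegral_le_lintegral _ _
      refine le_trans ?_ hsub
      have hpt : ∀ t ∈ Metric.ball u ε,
          ENNReal.ofReal ((1/2)^2) ≤ (‖ftm μ g t‖₊ : ℝ≥0∞) ^ 2 := by
        intro t ht
        rw [sq_nnnorm_eq]
        apply ENNReal.ofReal_le_ofReal
        have hd : dist (t + -u) 0 < ε := by
          rw [Metric.mem_ball] at ht
          simpa [dist_eq_norm, sub_eq_add_neg] using ht
        have hFl := hFlow (t + -u) hd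
        rw [hkey t]
        exact pow_le_pow_left₀ (by norm_num) hFl 2
      calc ENNReal.ofReal ((1/2)^2) * ν (Metric.ball u ε)
          = ∫⁻ _ in Metric.ball u ε, ENNReal.ofReal ((1/2)^2) ∂ν := by
            rw [setLIntegral_const]
        _ ≤ ∫⁻ t in Metric.ball u ε, (‖ftm μ g t‖₊ : ℝ≥0∞) ^ 2 ∂ν :=
            setLIntegral_mono' measurableSet_ball hpt
    have hq : ENNReal.ofReal ((1/2:ℝ)^2) = 4⁻¹ := by
      rw [show ((1/2:ℝ)^2) = (4:ℝ)⁻¹ by norm_num, ← ENNReal.ofReal_ofNat,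
        ENNReal.ofReal_inv_of_pos (by norm_num)]
    rw [hq] at hlow
    have hfin := le_trans hlow hb
    calc ν (Metric.ball u ε) = 4 * (4⁻¹ * ν (Metric.ball u ε)) := by
          rw [← mul_assoc, ENNReal.mul_inv_cancel (by norm_num) (by norm_num), one_mul]
      _ ≤ 4 * ENNReal.ofReal B := mul_le_mul_right hfin 4
  -- σ-finiteness from countable cover by ε-balls
  obtain ⟨s, hsc, hsd⟩ := TopologicalSpace.exists_countable_dense (Ed d)
  haveI : SigmaFinite ν := by
    refine Measure.sigmaFinite_of_countable (S := (fun u => Metric.ball u ε) '' s)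
      (hsc.image _) ?_ ?_
    · rintro t ⟨u, -, rfl⟩
      exact lt_of_le_of_lt (hballs u) (by simp [ENNReal.mul_lt_top, ENNReal.ofReal_lt_top])
    · apply Set.eq_univ_of_forall
      intro x
      rw [Set.sUnion_image]
      obtain ⟨u, hus, hud⟩ := Metric.mem_closure_iff.mp (hsd x) ε hε
      exact Set.mem_biUnion hus (by simpa [Metric.mem_ball, dist_comm] using hud)
  infer_instance


lemma conv_lintegral (μ : Measure (Ed d)) [IsProbabilityMeasure μ] (ν ρ : Measure (Ed d))
    [SFinite ν] [SFinite ρ] (f : Ed d → ℂ) (hf : MemLp f 2 μ) :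
    ∫⁻ t, (‖ftm μ f t‖₊ : ℝ≥0∞) ^ 2 ∂(ν ∗ ρ)
      = ∫⁻ y, ∫⁻ x, (‖ftm μ f (x + y)‖₊ : ℝ≥0∞) ^ 2 ∂ν ∂ρ := by
  have hc : Continuous (ftm μ f) := continuous_ftm μ f (hf.integrable one_le_two)
  have hg : Measurable fun t : Ed d => (‖ftm μ f t‖₊ : ℝ≥0∞) ^ 2 :=
    (hc.measurable.nnnorm.coe_nnreal_ennreal).pow_const 2
  have hmap : ν ∗ ρ = Measure.map (fun p : Ed d × Ed d => p.1 + p.2) (ν.prod ρ) := rfl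
  rw [hmap, lintegral_map hg (g := fun p : Ed d × Ed d => p.1 + p.2) (measurable_fst.add measurable_snd)]
  exact lintegral_prod_symm _ ((hg.comp (measurable_fst.add measurable_snd)).aemeasurable)

lemma inner_lintegral_eq (μ : Measure (Ed d)) (ν : Measure (Ed d)) (f : Ed d → ℂ) (y : Ed d) :
    ∫⁻ x, (‖ftm μ f (x + y)‖₊ : ℝ≥0∞) ^ 2 ∂ν
      = ∫⁻ x, (‖ftm μ (fun z => f z *
          Complex.exp (-(2 * Real.pi * (inner ℝ y z : ℝ)) * Complex.I)) x‖₊ : ℝ≥0∞) ^ 2 ∂ν := by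
  refine lintegral_congr fun x => ?_
  rw [ftm_add μ f x y]

end Stmt2Aux

/-- For fixed `A, B > 0` and a Borel probability measure `μ` on `ℝ^d`, the set of Bessel
measures with bound `B` and the set of frame measures with bounds `A, B` are convex and
closed under convolution with Borel probability measures. -/
theorem stmt2 {d : ℕ} (μ : Measure (Ed d)) [IsProbabilityMeasure μ] (A B : ℝ)
    (hA : 0 < A) (hB : 0 < B) :
    (∀ ν₁ ν₂ : Measure (Ed d), IsBesselBound μ ν₁ B → IsBesselBound μ ν₂ B →
      ∀ t : ℝ, 0 ≤ t → t ≤ 1 →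
        IsBesselBound μ (ENNReal.ofReal t • ν₁ + ENNReal.ofReal (1 - t) • ν₂) B) ∧
    (∀ ν₁ ν₂ : Measure (Ed d), IsFrameBounds μ ν₁ A B → IsFrameBounds μ ν₂ A B →
      ∀ t : ℝ, 0 ≤ t → t ≤ 1 →
        IsFrameBounds μ (ENNReal.ofReal t • ν₁ + ENNReal.ofReal (1 - t) • ν₂) A B) ∧
    (∀ ν ρ : Measure (Ed d), IsBesselBound μ ν B → IsProbabilityMeasure ρ →
      IsBesselBound μ (ν ∗ ρ) B) ∧
    (∀ ν ρ : Measure (Ed d), IsFrameBounds μ ν A B → IsProbabilityMeasure ρ →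
      IsFrameBounds μ (ν ∗ ρ) A B) := by
  
  have hA1 : (0:ℝ) ≤ A := hA.le
  refine ⟨?_, ?_, ?_, ?_⟩
  · -- Bessel measures are convex
    intro ν₁ ν₂ h₁ h₂ t ht0 ht1 f hf
    have hsum : ENNReal.ofReal t + ENNReal.ofReal (1 - t) = 1 := by
      rw [← ENNReal.ofReal_add ht0 (by linarith)]
      norm_num
    rw [lintegral_add_measure, lintegral_smul_measure, lintegral_smul_measure]
    refine le_trans (add_le_add (mul_le_mul_right (h₁ f hf) _)
      (mul_le_mul_right (h₂ f hf) _)) ?_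
    rw [← add_mul, hsum, one_mul]
  · -- frame measures are convex
    intro ν₁ ν₂ h₁ h₂ t ht0 ht1 f hf
    have hsum : ENNReal.ofReal t + ENNReal.ofReal (1 - t) = 1 := by
      rw [← ENNReal.ofReal_add ht0 (by linarith)]
      norm_num
    rw [lintegral_add_measure, lintegral_smul_measure, lintegral_smul_measure]
    constructor
    · have hrw : ENNReal.ofReal A * ∫⁻ x, (‖f x‖₊ : ℝ≥0∞) ^ 2 ∂μ
          = ENNReal.ofReal t * (ENNReal.ofReal A * ∫⁻ x, (‖f x‖₊ : ℝ≥0∞) ^ 2 ∂μ)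
            + ENNReal.ofReal (1 - t) * (ENNReal.ofReal A * ∫⁻ x, (‖f x‖₊ : ℝ≥0∞) ^ 2 ∂μ) := by
        rw [← add_mul, hsum, one_mul]
      rw [hrw]
      exact add_le_add (mul_le_mul_right (h₁ f hf).1 _) (mul_le_mul_right (h₂ f hf).1 _)
    · refine le_trans (add_le_add (mul_le_mul_right (h₁ f hf).2 _)
        (mul_le_mul_right (h₂ f hf).2 _)) ?_
      rw [← add_mul, hsum, one_mul]
  · -- Bessel measures are closed under convolution with probability measures
    intro ν ρ hν hρ
    haveI := hρ
    haveI : SFinite ν := Stmt2Aux.bessel_sfinite hν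
    intro f hf
    rw [Stmt2Aux.conv_lintegral μ ν ρ f hf]
    have hle : ∀ y : Ed d, ∫⁻ x, (‖ftm μ f (x + y)‖₊ : ℝ≥0∞) ^ 2 ∂ν
        ≤ ENNReal.ofReal B * ∫⁻ x, (‖f x‖₊ : ℝ≥0∞) ^ 2 ∂μ := by
      intro y
      rw [Stmt2Aux.inner_lintegral_eq μ ν f y]
      refine le_trans (hν _ (Stmt2Aux.memLp_mul_char μ hf y)) ?_
      rw [Stmt2Aux.lintegral_mul_char μ f y]
    refine le_trans (lintegral_mono hle) ?_
    rw [lintegral_const, measure_univ, mul_one]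
  · -- frame measures are closed under convolution with probability measures
    intro ν ρ hν hρ
    haveI := hρ
    haveI : SFinite ν := Stmt2Aux.bessel_sfinite (fun f hf => (hν f hf).2)
    intro f hf
    rw [Stmt2Aux.conv_lintegral μ ν ρ f hf]
    constructor
    · have hge : ∀ y : Ed d, ENNReal.ofReal A * ∫⁻ x, (‖f x‖₊ : ℝ≥0∞) ^ 2 ∂μ
          ≤ ∫⁻ x, (‖ftm μ f (x + y)‖₊ : ℝ≥0∞) ^ 2 ∂ν := by
        intro y
        rw [Stmt2Aux.inner_lintegral_eq μ ν f y, ← Stmt2Aux.lintegral_mul_char μ f y]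
        exact (hν _ (Stmt2Aux.memLp_mul_char μ hf y)).1
      refine le_trans ?_ (lintegral_mono hge)
      rw [lintegral_const, measure_univ, mul_one]
    · have hle : ∀ y : Ed d, ∫⁻ x, (‖ftm μ f (x + y)‖₊ : ℝ≥0∞) ^ 2 ∂ν
          ≤ ENNReal.ofReal B * ∫⁻ x, (‖f x‖₊ : ℝ≥0∞) ^ 2 ∂μ := by
        intro y
        rw [Stmt2Aux.inner_lintegral_eq μ ν f y]
        refine le_trans ((hν _ (Stmt2Aux.memLp_mul_char μ hf y)).2) ?_
        rw [Stmt2Aux.lintegral_mul_char μ f y]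
      refine le_trans (lintegral_mono hle) ?_
      rw [lintegral_const, measure_univ, mul_one]
end
end

section
/- Let μ be a compactly supported Borel probability measure on ℝ^d, let ν be a σ-finite Borel measure on ℝ^d, and let (λ_n) be a sequence of Borel probability measures on ℝ^d forming an approximate identity, i.e. sup{‖t‖ : t ∈ supp λ_n} → 0 as n → ∞. If each convolution ν∗λ_n is a Bessel measure for μ with bound B independent of n, then ν is a Bessel measure for μ with bound B. If each ν∗λ_n is a frame measure for μ with bounds A, B independent of n, then ν is a frame measure for μ. -/
open MeasureTheory Filter Metric Complex Set
open scoped ENNReal NNReal Real Topology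

noncomputable section

namespace Stmt4Aux
lemma norm_exp_mul_I_sub_one (θ : ℝ) : ‖Complex.exp ((θ:ℂ) * Complex.I) - 1‖ ≤ |θ| := by
  have h2 : ‖Complex.exp ((θ:ℂ) * Complex.I) - 1‖^2 = 2 - 2 * Real.cos θ := by
    rw [Complex.sq_norm, Complex.normSq_apply]
    simp only [Complex.sub_re, Complex.sub_im, Complex.one_re, Complex.one_im,
      Complex.exp_ofReal_mul_I_re, Complex.exp_ofReal_mul_I_im]
    nlinarith [Real.sin_sq_add_cos_sq θ]
  have e1 : Real.cos (2*(θ/2)) = 2 * Real.cos (θ/2)^2 - 1 := Real.cos_two_mul _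
  have e2 : Real.sin (θ/2)^2 + Real.cos (θ/2)^2 = 1 := Real.sin_sq_add_cos_sq _
  have e3 : 2*(θ/2) = θ := by ring
  have hc := e1
  rw [e3] at hc
  have h3 : 2 - 2 * Real.cos θ = 4 * Real.sin (θ/2)^2 := by nlinarith
  have h5 : Real.sin (θ/2)^2 ≤ (θ/2)^2 := by
    have := Real.abs_sin_le_abs (x := θ/2)
    rw [← _root_.sq_abs, ← _root_.sq_abs (θ/2)]
    exact pow_le_pow_left₀ (abs_nonneg _) this 2
  have h4 : ‖Complex.exp ((θ:ℂ) * Complex.I) - 1‖^2 ≤ |θ|^2 := by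
    rw [h2, h3, _root_.sq_abs θ]; nlinarith
  calc ‖Complex.exp ((θ:ℂ) * Complex.I) - 1‖
      = Real.sqrt (‖Complex.exp ((θ:ℂ) * Complex.I) - 1‖^2) := (Real.sqrt_sq (norm_nonneg _)).symm
    _ ≤ Real.sqrt (|θ|^2) := Real.sqrt_le_sqrt h4
    _ = |θ| := Real.sqrt_sq (abs_nonneg θ)

variable {d : ℕ}

def phase (t x : Ed d) : ℂ := Complex.exp (-(2 * Real.pi * (inner ℝ t x : ℝ)) * Complex.I)

lemma phase_def (t x : Ed d) :
    phase t x = Complex.exp (((-(2 * Real.pi * (inner ℝ t x : ℝ)) : ℝ) : ℂ) * Complex.I) := by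
  unfold phase
  push_cast
  ring_nf

lemma norm_phase (t x : Ed d) : ‖phase t x‖ = 1 := by
  rw [phase_def, Complex.norm_exp_ofReal_mul_I]

lemma phase_add (t s x : Ed d) : phase (t + s) x = phase t x * phase s x := by
  rw [phase_def, phase_def, phase_def, ← Complex.exp_add]
  congr 1
  have : (inner ℝ (t + s) x : ℝ) = (inner ℝ t x : ℝ) + (inner ℝ s x : ℝ) := inner_add_left t s x
  rw [this]
  push_cast
  ring

lemma norm_phase_sub_one (s x : Ed d) : ‖phase s x - 1‖ ≤ 2 * Real.pi * ‖s‖ * ‖x‖ := by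
  rw [phase_def]
  refine (norm_exp_mul_I_sub_one _).trans ?_
  rw [abs_neg, abs_mul, abs_mul]
  have h1 : |(2:ℝ)| = 2 := by norm_num
  have h2 : |Real.pi| = Real.pi := abs_of_nonneg Real.pi_pos.le
  rw [h1, h2]
  have := abs_real_inner_le_norm s x
  have : |(inner ℝ s x : ℝ)| ≤ ‖s‖ * ‖x‖ := abs_real_inner_le_norm s x
  nlinarith [Real.pi_pos]

lemma norm_phase_sub_one_le_two (s x : Ed d) : ‖phase s x - 1‖ ≤ 2 := by
  calc ‖phase s x - 1‖ ≤ ‖phase s x‖ + ‖(1:ℂ)‖ := norm_sub_le _ _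
    _ = 2 := by rw [norm_phase]; norm_num

lemma continuous_inner_right (x : Ed d) : Continuous fun t : Ed d => (inner ℝ t x : ℝ) :=
  continuous_id.inner continuous_const

lemma continuous_phase_left (x : Ed d) : Continuous fun t : Ed d => phase t x := by
  simp only [phase_def]
  have h : Continuous fun t : Ed d => -(2 * Real.pi * (inner ℝ t x : ℝ)) :=
    (continuous_const.mul (continuous_inner_right x)).neg
  exact Complex.continuous_exp.comp ((Complex.continuous_ofReal.comp h).mul continuous_const)

lemma continuous_phase_pair : Continuous fun p : Ed d × Ed d => phase p.1 p.2 := by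
  simp only [phase_def]
  have h : Continuous fun p : Ed d × Ed d => -(2 * Real.pi * (inner ℝ p.1 p.2 : ℝ)) :=
    (continuous_const.mul continuous_inner).neg
  exact Complex.continuous_exp.comp ((Complex.continuous_ofReal.comp h).mul continuous_const)

lemma ftm_def (μ : Measure (Ed d)) (f : Ed d → ℂ) (t : Ed d) :
    ftm μ f t = ∫ x, f x * phase t x ∂μ := rfl

lemma continuous_phase_right (s : Ed d) : Continuous fun x : Ed d => phase s x := by
  simp only [phase_def]
  have h : Continuous fun x : Ed d => -(2 * Real.pi * (inner ℝ s x : ℝ)) :=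
    (continuous_const.mul (continuous_const.inner continuous_id)).neg
  exact Complex.continuous_exp.comp ((Complex.continuous_ofReal.comp h).mul continuous_const)

lemma enorm_sq_eq (z : ℂ) : (‖z‖₊ : ℝ≥0∞)^2 = ENNReal.ofReal (‖z‖^2) := by
  rw [ENNReal.ofReal_pow (norm_nonneg _), ← coe_nnnorm, ENNReal.ofReal_coe_nnreal]

variable {μ : Measure (Ed d)} {f : Ed d → ℂ}

lemma ftm_continuous [IsFiniteMeasure μ] (hf : Integrable f μ) : Continuous (ftm μ f) := by
  have hrw : ftm μ f = fun t => ∫ x, f x * phase t x ∂μ := rfl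
  rw [hrw]
  apply continuous_of_dominated (bound := fun x => ‖f x‖)
  · intro t
    exact hf.aestronglyMeasurable.mul (continuous_phase_right t).aestronglyMeasurable
  · intro t
    filter_upwards with x
    simp only [norm_mul, norm_phase, mul_one, le_refl]
  · exact hf.norm
  · filter_upwards with x
    exact continuous_const.mul (continuous_phase_left x)

lemma norm_ftm_le (f : Ed d → ℂ) (t : Ed d) : ‖ftm μ f t‖ ≤ ∫ x, ‖f x‖ ∂μ := by
  rw [ftm_def]
  refine (norm_integral_le_integral_norm _).trans (le_of_eq ?_)
  refine integral_congr_ae (Eventually.of_forall fun x => ?_)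
  simp only [norm_mul, norm_phase, mul_one]

lemma integrable_mul_phase (hf : Integrable f μ) (s : Ed d) :
    Integrable (fun x => f x * phase s x) μ := by
  have := hf.bdd_mul (continuous_phase_right s).aestronglyMeasurable
    (Eventually.of_forall fun x => le_of_eq (norm_phase s x))
  refine this.congr (Eventually.of_forall fun x => mul_comm _ _)

lemma integrable_mul_phase_sub_one (hf : Integrable f μ) (s : Ed d) :
    Integrable (fun x => f x * (phase s x - 1)) μ := by
  have := hf.bdd_mul ((continuous_phase_right s).sub continuous_const).aestronglyMeasurable
    (Eventually.of_forall fun x => norm_phase_sub_one_le_two s x)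
  refine this.congr (Eventually.of_forall fun x => mul_comm _ _)

lemma ftm_add_point (hf : Integrable f μ) (t s : Ed d) :
    ftm μ f (t + s) = ftm μ f t + ftm μ (fun x => f x * (phase s x - 1)) t := by
  have h1 : Integrable (fun x => f x * phase t x) μ := integrable_mul_phase hf t
  have h2 : Integrable (fun x => (f x * (phase s x - 1)) * phase t x) μ :=
    integrable_mul_phase (integrable_mul_phase_sub_one hf s) t
  simp only [ftm_def]
  rw [← integral_add h1 h2]
  refine integral_congr_ae (Eventually.of_forall fun x => ?_)
  simp only [phase_add]
  ring

lemma memLp_mul_phase_sub_one (hf : MemLp f 2 μ) (s : Ed d) :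
    MemLp (fun x => f x * (phase s x - 1)) 2 μ := by
  refine MemLp.of_le_mul (c := 2) hf
    (hf.aestronglyMeasurable.mul ((continuous_phase_right s).sub continuous_const).aestronglyMeasurable)
    (Eventually.of_forall fun x => ?_)
  rw [norm_mul, mul_comm (2:ℝ) _]
  exact mul_le_mul_of_nonneg_left (norm_phase_sub_one_le_two s x) (norm_nonneg _)

lemma norm_ftm_mul_phase_sub_one_le {R e : ℝ} (hRae : ∀ᵐ x ∂μ, ‖x‖ ≤ R) (hf : Integrable f μ)
    {s : Ed d} (hs : ‖s‖ ≤ e) (hR0 : 0 ≤ R) (t : Ed d) :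
    ‖ftm μ (fun x => f x * (phase s x - 1)) t‖ ≤ 2*Real.pi*e*R * ∫ x, ‖f x‖ ∂μ := by
  have he : 0 ≤ e := (norm_nonneg s).trans hs
  refine (norm_ftm_le _ t).trans ?_
  have hint1 : Integrable (fun x => ‖f x * (phase s x - 1)‖) μ :=
    (integrable_mul_phase_sub_one hf s).norm
  have hint2 : Integrable (fun x => (2*Real.pi*e*R) * ‖f x‖) μ := hf.norm.const_mul _
  refine le_trans (integral_mono_ae hint1 hint2 ?_) (le_of_eq (integral_const_mul _ _))
  filter_upwards [hRae] with x hx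
  rw [norm_mul]
  have h1 : ‖phase s x - 1‖ ≤ 2*Real.pi*e*R := by
    refine (norm_phase_sub_one s x).trans ?_
    have hprod : ‖s‖ * ‖x‖ ≤ e * R := mul_le_mul hs hx (norm_nonneg x) he
    calc 2*Real.pi*‖s‖*‖x‖ = 2*Real.pi*(‖s‖*‖x‖) := by ring
      _ ≤ 2*Real.pi*(e*R) := mul_le_mul_of_nonneg_left hprod (by positivity)
      _ = 2*Real.pi*e*R := by ring
  calc ‖f x‖ * ‖phase s x - 1‖ ≤ ‖f x‖ * (2*Real.pi*e*R) :=
        mul_le_mul_of_nonneg_left h1 (norm_nonneg _)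
    _ = 2*Real.pi*e*R * ‖f x‖ := mul_comm _ _

lemma lintegral_sq_mul_phase_sub_one_le {R e : ℝ} (hRae : ∀ᵐ x ∂μ, ‖x‖ ≤ R)
    {s : Ed d} (hs : ‖s‖ ≤ e) (hR0 : 0 ≤ R) (f : Ed d → ℂ) :
    ∫⁻ x, (‖f x * (phase s x - 1)‖₊ : ℝ≥0∞)^2 ∂μ
      ≤ ENNReal.ofReal ((2*Real.pi*e*R)^2) * ∫⁻ x, (‖f x‖₊ : ℝ≥0∞)^2 ∂μ := by
  have he : 0 ≤ e := (norm_nonneg s).trans hs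
  rw [← lintegral_const_mul' _ _ ENNReal.ofReal_ne_top]
  refine lintegral_mono_ae ?_
  filter_upwards [hRae] with x hx
  have h1 : ‖phase s x - 1‖ ≤ 2*Real.pi*e*R := by
    refine (norm_phase_sub_one s x).trans ?_
    have hprod : ‖s‖ * ‖x‖ ≤ e * R := mul_le_mul hs hx (norm_nonneg x) he
    calc 2*Real.pi*‖s‖*‖x‖ = 2*Real.pi*(‖s‖*‖x‖) := by ring
      _ ≤ 2*Real.pi*(e*R) := mul_le_mul_of_nonneg_left hprod (by positivity)
      _ = 2*Real.pi*e*R := by ring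
  have hnorm : ‖f x * (phase s x - 1)‖ ≤ (2*Real.pi*e*R) * ‖f x‖ := by
    rw [norm_mul]
    calc ‖f x‖ * ‖phase s x - 1‖ ≤ ‖f x‖ * (2*Real.pi*e*R) :=
          mul_le_mul_of_nonneg_left h1 (norm_nonneg _)
      _ = 2*Real.pi*e*R * ‖f x‖ := mul_comm _ _
  calc (‖f x * (phase s x - 1)‖₊ : ℝ≥0∞)^2 = ENNReal.ofReal (‖f x * (phase s x - 1)‖^2) :=
        enorm_sq_eq _
    _ ≤ ENNReal.ofReal ((2*Real.pi*e*R * ‖f x‖)^2) :=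
        ENNReal.ofReal_le_ofReal (by nlinarith [norm_nonneg (f x * (phase s x - 1))])
    _ = ENNReal.ofReal ((2*Real.pi*e*R)^2) * ENNReal.ofReal (‖f x‖^2) := by
        rw [mul_pow, ENNReal.ofReal_mul (by positivity)]
    _ = ENNReal.ofReal ((2*Real.pi*e*R)^2) * (‖f x‖₊ : ℝ≥0∞)^2 := by rw [enorm_sq_eq]

lemma lintegral_conv (ν lamn : Measure (Ed d)) [SFinite ν] [SFinite lamn] {h : Ed d → ℝ≥0∞}
    (hh : Measurable h) :
    ∫⁻ t, h t ∂(ν ∗ lamn) = ∫⁻ t, ∫⁻ s, h (t + s) ∂lamn ∂ν := by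
  have hconv : ν ∗ lamn = Measure.map (fun p : Ed d × Ed d => p.1 + p.2) (ν.prod lamn) := rfl
  rw [hconv, lintegral_map hh measurable_add]
  exact lintegral_prod (fun p => h (p.1 + p.2)) ((hh.comp measurable_add).aemeasurable)

lemma lintegral_conv' (ν lamn : Measure (Ed d)) [SFinite ν] [SFinite lamn] {h : Ed d → ℝ≥0∞}
    (hh : Measurable h) :
    ∫⁻ t, h t ∂(ν ∗ lamn) = ∫⁻ s, ∫⁻ t, h (t + s) ∂ν ∂lamn := by
  have hconv : ν ∗ lamn = Measure.map (fun p : Ed d × Ed d => p.1 + p.2) (ν.prod lamn) := rfl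
  rw [hconv, lintegral_map hh measurable_add]
  exact lintegral_prod_symm (fun p => h (p.1 + p.2)) ((hh.comp measurable_add).aemeasurable)

lemma ae_norm_le {lamn : Measure (Ed d)} {e : ℝ}
    (hsupp : lamn (Metric.closedBall (0 : Ed d) e)ᶜ = 0) : ∀ᵐ s ∂lamn, ‖s‖ ≤ e := by
  rw [ae_iff]
  refine measure_mono_null (fun s hs => ?_) hsupp
  simp only [mem_setOf_eq, not_le] at hs
  simp only [mem_compl_iff, Metric.mem_closedBall, dist_zero_right, not_le]
  exact hs

lemma eps_nonneg {lamn : Measure (Ed d)} [IsProbabilityMeasure lamn] {e : ℝ}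
    (hsupp : lamn (Metric.closedBall (0 : Ed d) e)ᶜ = 0) : 0 ≤ e := by
  by_contra hlt
  push_neg at hlt
  rw [Metric.closedBall_eq_empty.mpr hlt, compl_empty] at hsupp
  rw [measure_univ] at hsupp
  exact one_ne_zero hsupp

lemma besselAux (μ : Measure (Ed d)) [IsProbabilityMeasure μ]
    {R : ℝ} (hR0 : 0 ≤ R) (hRae : ∀ᵐ x ∂μ, ‖x‖ ≤ R)
    (ν : Measure (Ed d)) [SigmaFinite ν]
    (lam : ℕ → Measure (Ed d)) (hlam : ∀ n, IsProbabilityMeasure (lam n))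
    (ε : ℕ → ℝ) (hε : Tendsto ε atTop (nhds 0))
    (hsupp : ∀ n, (lam n) (Metric.closedBall (0 : Ed d) (ε n))ᶜ = 0)
    (B : ℝ) (hB : ∀ n, IsBesselBound μ (ν ∗ lam n) B) : IsBesselBound μ ν B := by
  intro f hf
  have hfi : Integrable f μ := hf.integrable one_le_two
  set c := ∫ x, ‖f x‖ ∂μ with hc
  have hft_cont : Continuous (ftm μ f) := ftm_continuous hfi
  have hhm : Measurable fun t => (‖ftm μ f t‖₊ : ℝ≥0∞)^2 :=
    (hft_cont.measurable.nnnorm.coe_nnreal_ennreal).pow_const 2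
  have key : ∀ (t : Ed d) (n : ℕ),
      ENNReal.ofReal ((max (‖ftm μ f t‖ - 2*Real.pi*(ε n)*R*c) 0)^2)
        ≤ ∫⁻ s, (‖ftm μ f (t+s)‖₊ : ℝ≥0∞)^2 ∂(lam n) := by
    intro t n
    haveI := hlam n
    have hae : ∀ᵐ s ∂lam n, ‖s‖ ≤ ε n := ae_norm_le (hsupp n)
    have hpt : ∀ᵐ s ∂lam n,
        ENNReal.ofReal ((max (‖ftm μ f t‖ - 2*Real.pi*(ε n)*R*c) 0)^2)
          ≤ (‖ftm μ f (t+s)‖₊ : ℝ≥0∞)^2 := by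
      filter_upwards [hae] with s hs
      rw [enorm_sq_eq]
      refine ENNReal.ofReal_le_ofReal ?_
      have hsplit := ftm_add_point hfi t s
      have hb := norm_ftm_mul_phase_sub_one_le hRae hfi hs hR0 t
      have h3 : ‖ftm μ f t‖ ≤ ‖ftm μ f (t+s)‖ + ‖ftm μ (fun x => f x*(phase s x - 1)) t‖ := by
        have heq : ftm μ f t = ftm μ f (t+s) - ftm μ (fun x => f x*(phase s x - 1)) t := by
          rw [hsplit]; ring
        rw [heq]
        exact norm_sub_le _ _
      have h2 : max (‖ftm μ f t‖ - 2*Real.pi*(ε n)*R*c) 0 ≤ ‖ftm μ f (t+s)‖ := by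
        refine max_le (by linarith) (norm_nonneg _)
      exact pow_le_pow_left₀ (le_max_right _ 0) h2 2
    calc ENNReal.ofReal ((max (‖ftm μ f t‖ - 2*Real.pi*(ε n)*R*c) 0)^2)
        = ∫⁻ _, ENNReal.ofReal ((max (‖ftm μ f t‖ - 2*Real.pi*(ε n)*R*c) 0)^2) ∂lam n := by
          rw [lintegral_const, measure_univ, mul_one]
      _ ≤ ∫⁻ s, (‖ftm μ f (t+s)‖₊ : ℝ≥0∞)^2 ∂lam n := lintegral_mono_ae hpt
  have hlim : ∀ t, (‖ftm μ f t‖₊ : ℝ≥0∞)^2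
      ≤ liminf (fun n => ∫⁻ s, (‖ftm μ f (t+s)‖₊ : ℝ≥0∞)^2 ∂lam n) atTop := by
    intro t
    have hcont : Continuous fun e : ℝ => (max (‖ftm μ f t‖ - 2*Real.pi*e*R*c) 0)^2 := by
      apply Continuous.pow
      exact (continuous_const.sub (((continuous_const.mul continuous_id).mul
        continuous_const).mul continuous_const)).max continuous_const
    have htendR : Tendsto (fun n => (max (‖ftm μ f t‖ - 2*Real.pi*(ε n)*R*c) 0)^2) atTop
        (nhds ((max (‖ftm μ f t‖ - 2*Real.pi*0*R*c) 0)^2)) :=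
      (hcont.continuousAt.tendsto).comp hε
    have htend : Tendsto (fun n => ENNReal.ofReal ((max (‖ftm μ f t‖ - 2*Real.pi*(ε n)*R*c) 0)^2))
        atTop (nhds ((‖ftm μ f t‖₊ : ℝ≥0∞)^2)) := by
      have h0 : (max (‖ftm μ f t‖ - 2*Real.pi*0*R*c) 0)^2 = ‖ftm μ f t‖^2 := by
        rw [mul_zero]
        norm_num [max_eq_left (norm_nonneg (ftm μ f t))]
      rw [enorm_sq_eq]
      exact (ENNReal.continuous_ofReal.continuousAt.tendsto).comp (h0 ▸ htendR)
    calc (‖ftm μ f t‖₊ : ℝ≥0∞)^2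
        = liminf (fun n => ENNReal.ofReal ((max (‖ftm μ f t‖ - 2*Real.pi*(ε n)*R*c) 0)^2)) atTop :=
          htend.liminf_eq.symm
      _ ≤ liminf (fun n => ∫⁻ s, (‖ftm μ f (t+s)‖₊ : ℝ≥0∞)^2 ∂lam n) atTop :=
          liminf_le_liminf (Eventually.of_forall fun n => key t n)
  have hmeas_inner : ∀ n, Measurable fun t => ∫⁻ s, (‖ftm μ f (t+s)‖₊ : ℝ≥0∞)^2 ∂lam n := by
    intro n
    haveI := hlam n
    exact (hhm.comp measurable_add).lintegral_prod_right'
  calc ∫⁻ t, (‖ftm μ f t‖₊ : ℝ≥0∞)^2 ∂ν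
      ≤ ∫⁻ t, liminf (fun n => ∫⁻ s, (‖ftm μ f (t+s)‖₊ : ℝ≥0∞)^2 ∂lam n) atTop ∂ν :=
        lintegral_mono hlim
    _ ≤ liminf (fun n => ∫⁻ t, ∫⁻ s, (‖ftm μ f (t+s)‖₊ : ℝ≥0∞)^2 ∂lam n ∂ν) atTop :=
        lintegral_liminf_le hmeas_inner
    _ = liminf (fun n => ∫⁻ t, (‖ftm μ f t‖₊ : ℝ≥0∞)^2 ∂(ν ∗ lam n)) atTop := by
        congr 1
        funext n
        haveI := hlam n
        exact (lintegral_conv ν (lam n) hhm).symm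
    _ ≤ ENNReal.ofReal B * ∫⁻ x, (‖f x‖₊ : ℝ≥0∞)^2 ∂μ := by
        refine le_trans (liminf_le_liminf (Eventually.of_forall fun n => hB n f hf)) ?_
        simp [liminf_const]
lemma sq_lint_ne_top (μ : Measure (Ed d)) {f : Ed d → ℂ} (hf : MemLp f 2 μ) :
    ∫⁻ x, (‖f x‖₊ : ℝ≥0∞)^2 ∂μ ≠ ∞ := by
  have h1 := hf.2
  rw [eLpNorm_eq_lintegral_rpow_enorm_toReal (by norm_num) (by norm_num)] at h1
  have h2 : (∫⁻ x, (‖f x‖₊ : ℝ≥0∞) ^ ((2:ℝ≥0∞).toReal) ∂μ) < ∞ := by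
    have := (ENNReal.rpow_lt_top_iff_of_pos (x := ∫⁻ x, (‖f x‖₊ : ℝ≥0∞) ^ ((2:ℝ≥0∞).toReal) ∂μ)
      (y := 1 / (2:ℝ≥0∞).toReal) (by norm_num)).mp h1
    exact this
  have h3 : (2:ℝ≥0∞).toReal = ((2:ℕ):ℝ) := by norm_num
  rw [h3] at h2
  simp_rw [ENNReal.rpow_natCast] at h2
  exact h2.ne

lemma frameAux (μ : Measure (Ed d)) [IsProbabilityMeasure μ]
    {R : ℝ} (hR0 : 0 ≤ R) (hRae : ∀ᵐ x ∂μ, ‖x‖ ≤ R)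
    (ν : Measure (Ed d)) [SigmaFinite ν]
    (lam : ℕ → Measure (Ed d)) (hlam : ∀ n, IsProbabilityMeasure (lam n))
    (ε : ℕ → ℝ) (hε : Tendsto ε atTop (nhds 0))
    (hsupp : ∀ n, (lam n) (Metric.closedBall (0 : Ed d) (ε n))ᶜ = 0)
    (A B : ℝ) (hA : 0 < A) (hB : 0 < B)
    (hF : ∀ n, IsFrameBounds μ (ν ∗ lam n) A B) :
    IsFrameBounds μ ν (A/4) B := by
  have hBess : IsBesselBound μ ν B :=
    besselAux μ hR0 hRae ν lam hlam ε hε hsupp B (fun n f hf => (hF n f hf).2)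
  have htend : Tendsto (fun n => 2*B*(2*Real.pi*(ε n)*R)^2) atTop (nhds 0) := by
    have hcont : Continuous fun e : ℝ => 2*B*(2*Real.pi*e*R)^2 := by continuity
    have h := (hcont.continuousAt.tendsto).comp hε
    simpa [Function.comp_def] using h
  obtain ⟨n, hn⟩ : ∃ n, 2*B*(2*Real.pi*(ε n)*R)^2 ≤ A/2 :=
    (htend.eventually (eventually_le_nhds (by positivity : (0:ℝ) < A/2))).exists
  intro f hf
  refine ⟨?_, hBess f hf⟩
  haveI := hlam n
  have hfi : Integrable f μ := hf.integrable one_le_two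
  have hft_cont : Continuous (ftm μ f) := ftm_continuous hfi
  have hhm : Measurable fun t => (‖ftm μ f t‖₊ : ℝ≥0∞)^2 :=
    (hft_cont.measurable.nnnorm.coe_nnreal_ennreal).pow_const 2
  set T := ∫⁻ x, (‖f x‖₊ : ℝ≥0∞)^2 ∂μ with hT
  set L := ∫⁻ t, (‖ftm μ f t‖₊ : ℝ≥0∞)^2 ∂ν with hL
  have hT_ne : T ≠ ∞ := sq_lint_ne_top μ hf
  set D : ℝ := 2*B*(2*Real.pi*(ε n)*R)^2 with hD
  have hstep : ENNReal.ofReal A * T ≤ 2*L + ENNReal.ofReal D * T := by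
    have h1 : ENNReal.ofReal A * T ≤ ∫⁻ t, (‖ftm μ f t‖₊ : ℝ≥0∞)^2 ∂(ν ∗ lam n) :=
      (hF n f hf).1
    rw [lintegral_conv' ν (lam n) hhm] at h1
    refine h1.trans ?_
    have hae : ∀ᵐ s ∂lam n, ‖s‖ ≤ ε n := ae_norm_le (hsupp n)
    have hbound : ∀ᵐ s ∂lam n, ∫⁻ t, (‖ftm μ f (t+s)‖₊ : ℝ≥0∞)^2 ∂ν
        ≤ 2*L + ENNReal.ofReal D * T := by
      filter_upwards [hae] with s hs
      set g := fun x => f x * (phase s x - 1) with hg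
      have hgmem : MemLp g 2 μ := memLp_mul_phase_sub_one hf s
      have hpt : ∀ t, (‖ftm μ f (t+s)‖₊ : ℝ≥0∞)^2
          ≤ 2*(‖ftm μ f t‖₊ : ℝ≥0∞)^2 + 2*(‖ftm μ g t‖₊ : ℝ≥0∞)^2 := by
        intro t
        have hsplit := ftm_add_point hfi t s
        rw [← hg] at hsplit
        calc (‖ftm μ f (t+s)‖₊ : ℝ≥0∞)^2 = ENNReal.ofReal (‖ftm μ f (t+s)‖^2) := enorm_sq_eq _
          _ ≤ ENNReal.ofReal (2*‖ftm μ f t‖^2 + 2*‖ftm μ g t‖^2) := by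
              refine ENNReal.ofReal_le_ofReal ?_
              rw [hsplit]
              nlinarith [norm_add_le (ftm μ f t) (ftm μ g t), norm_nonneg (ftm μ f t),
                norm_nonneg (ftm μ g t), norm_nonneg (ftm μ f t + ftm μ g t),
                sq_nonneg (‖ftm μ f t‖ - ‖ftm μ g t‖)]
          _ = 2*(‖ftm μ f t‖₊ : ℝ≥0∞)^2 + 2*(‖ftm μ g t‖₊ : ℝ≥0∞)^2 := by
              rw [ENNReal.ofReal_add (by positivity) (by positivity),
                ENNReal.ofReal_mul (by norm_num), ENNReal.ofReal_mul (by norm_num),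
                enorm_sq_eq, enorm_sq_eq, ENNReal.ofReal_ofNat]
      have hgBess := hBess g hgmem
      have hg2 := lintegral_sq_mul_phase_sub_one_le hRae hs hR0 f
      calc ∫⁻ t, (‖ftm μ f (t+s)‖₊ : ℝ≥0∞)^2 ∂ν
          ≤ ∫⁻ t, (2*(‖ftm μ f t‖₊ : ℝ≥0∞)^2 + 2*(‖ftm μ g t‖₊ : ℝ≥0∞)^2) ∂ν :=
            lintegral_mono hpt
        _ = 2*L + 2*∫⁻ t, (‖ftm μ g t‖₊ : ℝ≥0∞)^2 ∂ν := by
            rw [lintegral_add_left (hhm.const_mul 2), lintegral_const_mul' 2 _ (by norm_num),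
              lintegral_const_mul' 2 _ (by norm_num)]
        _ ≤ 2*L + ENNReal.ofReal D * T := by
            refine add_le_add_right ?_ _
            calc 2*∫⁻ t, (‖ftm μ g t‖₊ : ℝ≥0∞)^2 ∂ν
                ≤ 2*(ENNReal.ofReal B * ∫⁻ x, (‖g x‖₊ : ℝ≥0∞)^2 ∂μ) := by
                  exact mul_le_mul_right hgBess 2
              _ ≤ 2*(ENNReal.ofReal B * (ENNReal.ofReal ((2*Real.pi*(ε n)*R)^2) * T)) := by
                  exact mul_le_mul_right (mul_le_mul_right hg2 _) 2
              _ = ENNReal.ofReal D * T := by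
                  rw [hD, ← ENNReal.ofReal_ofNat 2, ← mul_assoc, ← mul_assoc,
                    ← ENNReal.ofReal_mul (by norm_num), ← ENNReal.ofReal_mul (by positivity)]
    calc ∫⁻ s, ∫⁻ t, (‖ftm μ f (t+s)‖₊ : ℝ≥0∞)^2 ∂ν ∂lam n
        ≤ ∫⁻ _, (2*L + ENNReal.ofReal D * T) ∂lam n := lintegral_mono_ae hbound
      _ = 2*L + ENNReal.ofReal D * T := by rw [lintegral_const, measure_univ, mul_one]
  -- cancellation
  set Y := ENNReal.ofReal (A/2) * T with hY
  have hY_ne : Y ≠ ∞ := ENNReal.mul_ne_top ENNReal.ofReal_ne_top hT_ne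
  have hAsplit : ENNReal.ofReal A * T = Y + Y := by
    rw [hY, ← add_mul, ← ENNReal.ofReal_add (by positivity) (by positivity)]
    norm_num
  have hsmall : ENNReal.ofReal D * T ≤ Y := mul_le_mul_left (ENNReal.ofReal_le_ofReal hn) T
  have hYle : Y + Y ≤ 2*L + Y := by
    rw [← hAsplit]
    exact hstep.trans (add_le_add_right hsmall _)
  have hY2L : Y ≤ 2*L := (ENNReal.add_le_add_iff_right hY_ne).mp hYle
  have hfinal : 2*(ENNReal.ofReal (A/4) * T) = Y := by
    rw [hY, ← mul_assoc, ← ENNReal.ofReal_ofNat 2, ← ENNReal.ofReal_mul (by norm_num)]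
    congr 1
    ring
  have h2 : (2:ℝ≥0∞) * (ENNReal.ofReal (A/4) * T) ≤ 2 * L := by
    rw [hfinal]; exact hY2L
  exact (ENNReal.mul_le_mul_iff_right (by norm_num) (by norm_num)).mp h2

end Stmt4Aux

/-- Stability of Bessel/frame measures under approximate identities: if `ν∗λ_n` are
Bessel (resp. frame) measures for `μ` with uniform bounds, and the supports of the probability
measures `λ_n` shrink to `{0}`, then `ν` is a Bessel (resp. frame) measure for `μ`. -/
theorem stmt4 {d : ℕ} (μ : Measure (Ed d)) [IsProbabilityMeasure μ]
    (hμc : ∃ K : Set (Ed d), IsCompact K ∧ μ Kᶜ = 0)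
    (ν : Measure (Ed d)) [SigmaFinite ν]
    (lam : ℕ → Measure (Ed d)) (hlam : ∀ n, IsProbabilityMeasure (lam n))
    (ε : ℕ → ℝ) (hε : Tendsto ε atTop (nhds 0))
    (hsupp : ∀ n, (lam n) (Metric.closedBall (0 : Ed d) (ε n))ᶜ = 0) :
    (∀ B : ℝ, 0 < B → (∀ n, IsBesselBound μ (ν ∗ lam n) B) → IsBesselBound μ ν B) ∧
    (∀ A B : ℝ, 0 < A → 0 < B → (∀ n, IsFrameBounds μ (ν ∗ lam n) A B) →
      ∃ A' B' : ℝ, 0 < A' ∧ 0 < B' ∧ IsFrameBounds μ ν A' B') := by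
  obtain ⟨K, hKc, hKμ⟩ := hμc
  obtain ⟨r, hr⟩ := hKc.isBounded.subset_closedBall 0
  have hRae : ∀ᵐ x ∂μ, ‖x‖ ≤ max r 0 := by
    rw [ae_iff]
    refine measure_mono_null (fun x hx => ?_) hKμ
    simp only [mem_setOf_eq, not_le] at hx
    intro hxK
    have := hr hxK
    rw [Metric.mem_closedBall, dist_zero_right] at this
    exact absurd (this.trans (le_max_left r 0)) (not_le.mpr hx)
  constructor
  · intro B hB hBess
    exact Stmt4Aux.besselAux μ (le_max_right r 0) hRae ν lam hlam ε hε hsupp B hBess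
  · intro A B hA hB hFr
    exact ⟨A/4, B, by positivity, hB,
      Stmt4Aux.frameAux μ (le_max_right r 0) hRae ν lam hlam ε hε hsupp A B hA hB hFr⟩
end
end

section
/- Let μ and μ' be Borel probability measures on ℝ^d and let 1 ≤ p ≤ ∞. For f ∈ L^p(μ), let Pf denote the Radon–Nikodym derivative of (f dμ)∗μ' with respect to μ∗μ'. Then Pf ∈ L^p(μ∗μ') and ‖Pf‖_{L^p(μ∗μ')} ≤ ‖f‖_{L^p(μ)}. -/
open MeasureTheory Filter Metric Complex Set
open scoped ENNReal NNReal Real Topology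

noncomputable section

/-- For probability measures `μ, μ'` on `ℝ^d`, `1 ≤ p ≤ ∞` and `f ∈ L^p(μ)`, the
Radon–Nikodym derivative `Pf` of `(f dμ)∗μ'` with respect to `μ∗μ'` (characterized by
`∬ χ_s(x+y) f(x) dμ dμ' = ∫_s Pf d(μ∗μ')` for all measurable `s`) lies in `L^p(μ∗μ')` and
`‖Pf‖_{L^p(μ∗μ')} ≤ ‖f‖_{L^p(μ)}`. -/
theorem stmt6 {d : ℕ} (μ μ' : Measure (Ed d)) [IsProbabilityMeasure μ]
    [IsProbabilityMeasure μ'] (p : ℝ≥0∞) (hp : 1 ≤ p)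
    (f : Ed d → ℂ) (hf : MemLp f p μ)
    (Pf : Ed d → ℂ) (hPfm : AEStronglyMeasurable Pf (μ ∗ μ'))
    (hPf : ∀ s : Set (Ed d), MeasurableSet s →
      ∫ y, ∫ x, s.indicator (fun _ => f x) (x + y) ∂μ ∂μ' = ∫ z in s, Pf z ∂(μ ∗ μ')) :
    MemLp Pf p (μ ∗ μ') ∧ eLpNorm Pf p (μ ∗ μ') ≤ eLpNorm f p μ := by
  classical
  have hT : Measurable (fun w : Ed d × Ed d => w.1 + w.2) :=
    measurable_fst.add measurable_snd
  set T : Ed d × Ed d → Ed d := fun w => w.1 + w.2 with hTdef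
  set Pm : Measure (Ed d × Ed d) := μ.prod μ' with hPmdef
  set ρ : Measure (Ed d) := μ ∗ μ' with hρdef
  have hρ : ρ = Pm.map T := rfl
  -- measurable representative of f
  set f' : Ed d → ℂ := hf.1.mk f with hf'def
  have hf'sm : StronglyMeasurable f' := hf.1.stronglyMeasurable_mk
  have hff' : f =ᵐ[μ] f' := hf.1.ae_eq_mk
  set g : Ed d → ℝ≥0∞ := fun x => (‖f' x‖₊ : ℝ≥0∞) with hgdef
  have hg : Measurable g := hf'sm.measurable.nnnorm.coe_nnreal_ennreal
  have hInt : Integrable f μ := hf.integrable hp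
  have hgnorm : ∀ᵐ x ∂μ, g x = (‖f x‖₊ : ℝ≥0∞) := hff'.mono fun x hx => by
    simp only [hgdef, hx]
  have hB1 : ∫⁻ x, g x ∂μ < ∞ := by
    rw [lintegral_congr_ae hgnorm]; exact hInt.2
  -- the weighted pushforward measure σ and its RN derivative G
  set σ : Measure (Ed d) := (Pm.withDensity (fun w => g w.1)).map T with hσdef
  have hmarg : ∀ h : Ed d → ℝ≥0∞, Measurable h → ∫⁻ w, h w.1 ∂Pm = ∫⁻ x, h x ∂μ := by
    intro h hh
    rw [← lintegral_map hh measurable_fst, hPmdef, Measure.map_fst_prod]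
    simp [measure_univ]
  have hσuniv : σ Set.univ = ∫⁻ x, g x ∂μ := by
    rw [hσdef, Measure.map_apply hT MeasurableSet.univ]
    simp only [Set.preimage_univ]
    rw [withDensity_apply _ MeasurableSet.univ, Measure.restrict_univ]
    exact hmarg g hg
  haveI hσfin : IsFiniteMeasure σ := ⟨by rw [hσuniv]; exact hB1⟩
  have hσapply : ∀ s : Set (Ed d), MeasurableSet s → σ s = ∫⁻ w in T ⁻¹' s, g w.1 ∂Pm := by
    intro s hs
    rw [hσdef, Measure.map_apply hT hs, withDensity_apply _ (hT hs)]
  have hσρ : σ ≪ ρ := by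
    refine Measure.AbsolutelyContinuous.mk fun s hs h0 => ?_
    rw [hσapply s hs]
    refine setLIntegral_measure_zero _ _ ?_
    rwa [hρ, Measure.map_apply hT hs] at h0
  set G : Ed d → ℝ≥0∞ := σ.rnDeriv ρ with hGdef
  have hG : Measurable G := Measure.measurable_rnDeriv σ ρ
  have hGfin : ∀ᵐ z ∂ρ, G z < ∞ := Measure.rnDeriv_lt_top σ ρ
  have hGset : ∀ s : Set (Ed d), ∫⁻ z in s, G z ∂ρ = σ s := fun s =>
    Measure.setLIntegral_rnDeriv hσρ s
  -- main identity
  have hI : ∀ h : Ed d → ℝ≥0∞, Measurable h →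
      ∫⁻ z, h z * G z ∂ρ = ∫⁻ w, h (T w) * g w.1 ∂Pm := by
    intro h hh
    have h1 : ∫⁻ z, h z * G z ∂ρ = ∫⁻ z, h z ∂(ρ.withDensity G) := by
      rw [lintegral_withDensity_eq_lintegral_mul ρ hG hh]
      exact lintegral_congr fun z => (mul_comm _ _)
    have hcomp : Measurable fun w : Ed d × Ed d => h (T w) := hh.comp hT
    have hgg : Measurable fun w : Ed d × Ed d => g w.1 := hg.comp measurable_fst
    rw [h1, Measure.withDensity_rnDeriv_eq σ ρ hσρ, hσdef, lintegral_map hh hT,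
      lintegral_withDensity_eq_lintegral_mul Pm hgg hcomp]
    exact lintegral_congr fun w => (mul_comm _ _)
  -- key set estimate
  have hkey : ∀ s : Set (Ed d), MeasurableSet s →
      (‖∫ z in s, Pf z ∂ρ‖₊ : ℝ≥0∞) ≤ σ s := by
    intro s hs
    rw [← hPf s hs]
    have step1 : (‖∫ y, ∫ x, s.indicator (fun _ => f x) (x + y) ∂μ ∂μ'‖₊ : ℝ≥0∞)
        ≤ ∫⁻ y, ∫⁻ x, (‖s.indicator (fun _ => f x) (x + y)‖₊ : ℝ≥0∞) ∂μ ∂μ' := by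
      refine (enorm_integral_le_lintegral_enorm _).trans ?_
      exact lintegral_mono fun y => enorm_integral_le_lintegral_enorm _
    refine step1.trans (le_of_eq ?_)
    have hptwise : ∀ y, ∫⁻ x, (‖s.indicator (fun _ => f x) (x + y)‖₊ : ℝ≥0∞) ∂μ
        = ∫⁻ x, (T ⁻¹' s).indicator (fun w => g w.1) (x, y) ∂μ := by
      intro y
      refine lintegral_congr_ae (hff'.mono fun x hx => ?_)
      by_cases hmem : x + y ∈ s
      · simp [Set.indicator_apply, Set.mem_preimage, hTdef, hmem, hx, hgdef]
      · simp [Set.indicator_apply, Set.mem_preimage, hTdef, hmem]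
    have hmeas : Measurable fun w : Ed d × Ed d => (T ⁻¹' s).indicator (fun w => g w.1) w :=
      (hg.comp measurable_fst).indicator (hT hs)
    calc ∫⁻ y, ∫⁻ x, (‖s.indicator (fun _ => f x) (x + y)‖₊ : ℝ≥0∞) ∂μ ∂μ'
        = ∫⁻ y, ∫⁻ x, (T ⁻¹' s).indicator (fun w => g w.1) (x, y) ∂μ ∂μ' :=
          lintegral_congr fun y => hptwise y
      _ = ∫⁻ w, (T ⁻¹' s).indicator (fun w => g w.1) w ∂Pm :=
          (lintegral_prod_symm' _ hmeas).symm
      _ = ∫⁻ w in T ⁻¹' s, g w.1 ∂Pm := lintegral_indicator (hT hs) _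
      _ = σ s := (hσapply s hs).symm
  -- the real-valued version of G and its set integrals
  set G' : Ed d → ℝ := fun z => (G z).toReal with hG'def
  have hGint : ∫⁻ z, G z ∂ρ ≠ ∞ := by
    rw [Measure.lintegral_rnDeriv hσρ, hσuniv]; exact hB1.ne
  have hG'int : Integrable G' ρ := integrable_toReal_of_lintegral_ne_top hG.aemeasurable hGint
  have hG'set : ∀ s : Set (Ed d), MeasurableSet s → ∫ z in s, G' z ∂ρ = (σ s).toReal := by
    intro s hs
    rw [hG'def]
    rw [integral_toReal (hG.aemeasurable.restrict) (ae_restrict_of_ae hGfin), hGset s]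
  -- domination : a.e. ‖Pf z‖ ≤ G' z
  set Pf2 : Ed d → ℂ := hPfm.mk Pf with hPf2def
  have hPf2sm : StronglyMeasurable Pf2 := hPfm.stronglyMeasurable_mk
  have hPfPf2 : Pf =ᵐ[ρ] Pf2 := hPfm.ae_eq_mk
  set sn : ℕ → Set (Ed d) := fun n => {z | ‖Pf2 z‖ ≤ n} with hsndef
  have hsnmeas : ∀ n, MeasurableSet (sn n) := fun n =>
    measurableSet_le hPf2sm.measurable.norm measurable_const
  have hsnunion : ∀ z, ∃ n, z ∈ sn n := fun z => ⟨⌈‖Pf2 z‖⌉₊, by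
    simp only [hsndef, Set.mem_setOf_eq]; exact Nat.le_ceil _⟩
  have hPfint : ∀ n, IntegrableOn Pf (sn n) ρ := by
    intro n
    refine ⟨hPfm.restrict, ?_⟩
    show (∫⁻ z, (‖Pf z‖₊ : ℝ≥0∞) ∂(ρ.restrict (sn n))) < ∞
    calc ∫⁻ z in sn n, (‖Pf z‖₊ : ℝ≥0∞) ∂ρ
        = ∫⁻ z in sn n, (‖Pf2 z‖₊ : ℝ≥0∞) ∂ρ := by
          refine lintegral_congr_ae (ae_restrict_of_ae (hPfPf2.mono fun z hz => by simp only [hz]))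
      _ ≤ ∫⁻ _ in sn n, (n : ℝ≥0∞) ∂ρ := by
          refine setLIntegral_mono_ae (by fun_prop) ?_
          refine Eventually.of_forall fun z hz => ?_
          have : (‖Pf2 z‖₊ : ℝ) ≤ n := hz
          exact_mod_cast ENNReal.coe_le_coe.mpr (by exact_mod_cast this)
      _ < ∞ := by
          rw [setLIntegral_const]
          exact ENNReal.mul_lt_top (by simp) (measure_lt_top _ _)
  -- for each rational rotation the real part is dominated
  have hA3 : ∀ q : ℚ, ∀ n : ℕ, ∀ᵐ z ∂ρ, z ∈ sn n →
      (Complex.exp ((q : ℝ) * Complex.I) * Pf z).re ≤ G' z := by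
    intro q n
    set u : ℂ := Complex.exp ((q : ℝ) * Complex.I) with hudef
    have hunorm : ‖u‖ = 1 := by
      rw [hudef]; exact Complex.norm_exp_ofReal_mul_I _
    set ψ : Ed d → ℝ := fun z => G' z - (u * Pf z).re with hψdef
    have hψint : IntegrableOn ψ (sn n) ρ := by
      refine (hG'int.integrableOn).sub ?_
      have : IntegrableOn (fun z => u * Pf z) (sn n) ρ := (hPfint n).const_mul u
      simpa [IntegrableOn] using this.re
    have h0 : 0 ≤ᵐ[ρ.restrict (sn n)] ψ := by
      refine ae_nonneg_restrict_of_forall_setIntegral_nonneg_inter hψint ?_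
      intro s hs _
      have htmeas : MeasurableSet (s ∩ sn n) := hs.inter (hsnmeas n)
      have hPft : IntegrableOn Pf (s ∩ sn n) ρ := (hPfint n).mono_set Set.inter_subset_right
      have huPft : IntegrableOn (fun z => u * Pf z) (s ∩ sn n) ρ := hPft.const_mul u
      rw [hψdef, integral_sub (hG'int.integrableOn) (by simpa [IntegrableOn] using huPft.re), sub_nonneg]
      have h1 : ∫ z in s ∩ sn n, (u * Pf z).re ∂ρ = (u * ∫ z in s ∩ sn n, Pf z ∂ρ).re := by
        have := integral_re (𝕜 := ℂ) huPft
        simp only [RCLike.re_eq_complex_re] at this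
        rw [this, integral_const_mul]
      rw [h1]
      have h2 : (u * ∫ z in s ∩ sn n, Pf z ∂ρ).re ≤ ‖∫ z in s ∩ sn n, Pf z ∂ρ‖ := by
        refine (Complex.re_le_norm _).trans ?_
        rw [norm_mul, hunorm, one_mul]
      refine h2.trans ?_
      have h3 := hkey (s ∩ sn n) htmeas
      have h4 : ‖∫ z in s ∩ sn n, Pf z ∂ρ‖ ≤ (σ (s ∩ sn n)).toReal := by
        have := ENNReal.toReal_mono (measure_ne_top σ _) h3
        simpa using this
      rw [hG'set _ htmeas]
      exact h4
    have h0' : ∀ᵐ z ∂ρ.restrict (sn n), 0 ≤ ψ z := by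
      filter_upwards [h0] with z hz using hz
    rw [ae_restrict_iff' (hsnmeas n)] at h0'
    refine h0'.mono fun z hz hzn => ?_
    have := hz hzn
    simpa [hψdef, sub_nonneg] using this
  have hdom : ∀ᵐ z ∂ρ, (‖Pf z‖₊ : ℝ≥0∞) ≤ G z := by
    have hall : ∀ᵐ z ∂ρ, ∀ q : ℚ, ∀ n : ℕ, z ∈ sn n →
        (Complex.exp ((q : ℝ) * Complex.I) * Pf z).re ≤ G' z := by
      rw [ae_all_iff]; intro q; rw [ae_all_iff]; intro n; exact hA3 q n
    filter_upwards [hall, hGfin] with z hz hGz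
    have hq : ∀ q : ℚ, (Complex.exp ((q : ℝ) * Complex.I) * Pf z).re ≤ G' z := by
      intro q
      obtain ⟨n, hn⟩ := hsnunion z
      exact hz q n hn
    -- upgrade from rationals to all reals by continuity
    have hreal : ∀ t : ℝ, (Complex.exp (t * Complex.I) * Pf z).re ≤ G' z := by
      have hclosed : IsClosed {t : ℝ | (Complex.exp (t * Complex.I) * Pf z).re ≤ G' z} := by
        refine isClosed_le ?_ continuous_const
        fun_prop
      intro t
      have hsub : Set.range (Rat.cast : ℚ → ℝ) ⊆
          {t : ℝ | (Complex.exp (t * Complex.I) * Pf z).re ≤ G' z} := by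
        rintro _ ⟨q, rfl⟩; exact hq q
      have hdense : closure (Set.range (Rat.cast : ℚ → ℝ)) = Set.univ :=
        Rat.denseRange_cast.closure_eq
      have ht : t ∈ closure (Set.range (Rat.cast : ℚ → ℝ)) := by rw [hdense]; trivial
      have ht2 := closure_mono hsub ht
      rwa [hclosed.closure_eq] at ht2
    have hnorm : ‖Pf z‖ ≤ G' z := by
      have := hreal (-(Pf z).arg)
      have harg : Complex.exp ((-(Pf z).arg : ℝ) * Complex.I) * Pf z = (‖Pf z‖ : ℂ) := by
        calc Complex.exp ((-(Pf z).arg : ℝ) * Complex.I) * Pf z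
            = Complex.exp ((-(Pf z).arg : ℝ) * Complex.I) *
              (↑‖Pf z‖ * Complex.exp (((Pf z).arg : ℂ) * Complex.I)) := by
              rw [Complex.norm_mul_exp_arg_mul_I]
          _ = ↑‖Pf z‖ *
              Complex.exp (((-(Pf z).arg : ℝ) : ℂ) * Complex.I + ((Pf z).arg : ℂ) * Complex.I) := by
              rw [Complex.exp_add]; ring
          _ = ↑‖Pf z‖ := by
              have h0 : ((-(Pf z).arg : ℝ) : ℂ) * Complex.I + ((Pf z).arg : ℂ) * Complex.I = 0 := by
                push_cast; ring
              rw [h0, Complex.exp_zero, mul_one]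
          _ = (‖Pf z‖ : ℂ) := by rfl
      rw [harg] at this
      simpa using this
    calc (‖Pf z‖₊ : ℝ≥0∞) = ENNReal.ofReal ‖Pf z‖ := (ofReal_norm_eq_enorm _).symm
      _ ≤ ENNReal.ofReal (G' z) := ENNReal.ofReal_le_ofReal hnorm
      _ = G z := by rw [hG'def, ENNReal.ofReal_toReal hGz.ne]
  -- moment bound for G: for every real r > 1
  have hGr : ∀ r : ℝ, 1 < r → ∫⁻ z, G z ^ r ∂ρ ≤ ∫⁻ x, g x ^ r ∂μ := by
    intro r hr
    have hr0 : (0 : ℝ) < r := lt_trans one_pos hr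
    set B : ℝ≥0∞ := ∫⁻ x, g x ^ r ∂μ with hBdef
    by_cases hB : B = ∞
    · have hle : ∫⁻ z, G z ^ r ∂ρ ≤ B := hB ▸ le_top
      rwa [hBdef] at hle
    have hconj : r.HolderConjugate (r.conjExponent) := Real.HolderConjugate.conjExponent hr
    set q : ℝ := r.conjExponent with hqdef
    have hq0 : 0 < q := hconj.symm.pos
    have hAn : ∀ n : ℕ, ∫⁻ z, min (G z) n ^ r ∂ρ ≤ B := by
      intro n
      set M : Ed d → ℝ≥0∞ := fun z => min (G z) n with hMdef
      have hM : Measurable M := hG.min measurable_const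
      set An : ℝ≥0∞ := ∫⁻ z, M z ^ r ∂ρ with hAndef
      have hAnfin : An ≠ ∞ := by
        have : An ≤ (n : ℝ≥0∞) ^ r * ρ Set.univ := by
          rw [← setLIntegral_const Set.univ ((n : ℝ≥0∞) ^ r), ← lintegral_indicator MeasurableSet.univ]
          refine lintegral_mono fun z => ?_
          simp only [Set.indicator_univ]
          exact ENNReal.rpow_le_rpow (min_le_right _ _) hr0.le
        refine ne_of_lt (lt_of_le_of_lt this ?_)
        exact ENNReal.mul_lt_top (ENNReal.rpow_lt_top_of_nonneg hr0.le (by simp)) (measure_lt_top _ _)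
      have hMq : Measurable fun z => M z ^ (r - 1) := hM.pow_const _
      have step1 : An ≤ ∫⁻ z, M z ^ (r - 1) * G z ∂ρ := by
        refine lintegral_mono fun z => ?_
        have hMz : M z ^ r = M z ^ (r - 1) * M z ^ (1 : ℝ) := by
          rw [← ENNReal.rpow_add_of_nonneg _ _ (by linarith) zero_le_one]
          norm_num
        rw [hMz, ENNReal.rpow_one]
        exact mul_le_mul_right (min_le_left _ _) _
      have step2 : ∫⁻ z, M z ^ (r - 1) * G z ∂ρ = ∫⁻ w, M (T w) ^ (r - 1) * g w.1 ∂Pm :=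
        hI _ hMq
      have step3 : ∫⁻ w, M (T w) ^ (r - 1) * g w.1 ∂Pm ≤
          (∫⁻ w, (M (T w) ^ (r - 1)) ^ q ∂Pm) ^ (1 / q) * (∫⁻ w, g w.1 ^ r ∂Pm) ^ (1 / r) := by
        have := ENNReal.lintegral_mul_le_Lp_mul_Lq Pm hconj.symm
          ((hMq.comp hT).aemeasurable) ((hg.comp measurable_fst).aemeasurable)
        simpa using this
      have step4 : ∫⁻ w, (M (T w) ^ (r - 1)) ^ q ∂Pm = An := by
        have hpt : ∀ w, (M (T w) ^ (r - 1)) ^ q = M (T w) ^ r := by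
          intro w
          rw [← ENNReal.rpow_mul, hconj.sub_one_mul_conj]
        rw [lintegral_congr hpt, hAndef, hρ, lintegral_map (hM.pow_const r) hT]
      have step5 : ∫⁻ w, g w.1 ^ r ∂Pm = B := hmarg _ (hg.pow_const r)
      have main : An ≤ An ^ (1 / q) * B ^ (1 / r) := by
        calc An ≤ _ := step1
          _ = _ := step2
          _ ≤ _ := step3
          _ = An ^ (1 / q) * B ^ (1 / r) := by rw [step4, step5]
      by_cases hA0 : An = 0
      · rw [hA0]; exact bot_le
      have hsplit : An = An ^ (1 / q) * An ^ (1 / r) := by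
        rw [← ENNReal.rpow_add_of_nonneg _ _ (by positivity) (by positivity)]
        rw [one_div, one_div, hconj.symm.inv_add_inv_eq_one, ENNReal.rpow_one]
      have hcancel : An ^ (1 / r) ≤ B ^ (1 / r) := by
        have main2 : An ^ (1 / q) * An ^ (1 / r) ≤ An ^ (1 / q) * B ^ (1 / r) :=
          le_trans (le_of_eq hsplit.symm) main
        exact (ENNReal.mul_le_mul_iff_right
          (by simp [ENNReal.rpow_eq_zero_iff, hA0, hAnfin, hq0, (by positivity : (0:ℝ) < 1/q)])
          (ENNReal.rpow_ne_top_of_nonneg (by positivity) hAnfin)).mp main2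
      have := ENNReal.rpow_le_rpow hcancel hr0.le
      rwa [← ENNReal.rpow_mul, ← ENNReal.rpow_mul, one_div,
        inv_mul_cancel₀ hr0.ne', ENNReal.rpow_one, ENNReal.rpow_one] at this
    -- monotone convergence
    have hsup : ∀ z, ⨆ n : ℕ, min (G z) n ^ r = G z ^ r := by
      intro z
      refine le_antisymm (iSup_le fun n => ENNReal.rpow_le_rpow (min_le_left _ _) hr0.le) ?_
      by_cases hz : G z = ∞
      · rw [hz, ENNReal.top_rpow_of_pos hr0]
        by_contra hcon
        push_neg at hcon
        obtain ⟨m, hm⟩ := ENNReal.exists_nat_gt hcon.ne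
        have h1 : ((m : ℕ) : ℝ≥0∞) ≤ ⨆ n : ℕ, min (⊤ : ℝ≥0∞) (n : ℕ) ^ r := by
          have hmin : min (⊤ : ℝ≥0∞) ((m : ℕ) : ℝ≥0∞) = (m : ℝ≥0∞) := min_eq_right le_top
          have h2 : ((m : ℕ) : ℝ≥0∞) ≤ min (⊤ : ℝ≥0∞) ((m : ℕ) : ℝ≥0∞) ^ r := by
            rcases Nat.eq_zero_or_pos m with h0 | h0
            · simp [h0]
            · rw [hmin]
              calc ((m : ℕ) : ℝ≥0∞) = ((m : ℕ) : ℝ≥0∞) ^ (1 : ℝ) := (ENNReal.rpow_one _).symm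
                _ ≤ ((m : ℕ) : ℝ≥0∞) ^ r :=
                  ENNReal.rpow_le_rpow_of_exponent_le (by exact_mod_cast h0) hr.le
          exact h2.trans (le_iSup (fun n : ℕ => min (⊤ : ℝ≥0∞) (n : ℕ) ^ r) m)
        exact (hm.trans_le h1).false
      · obtain ⟨n, hn⟩ := ENNReal.exists_nat_gt hz
        have : min (G z) n = G z := min_eq_left hn.le
        calc G z ^ r = min (G z) n ^ r := by rw [this]
          _ ≤ ⨆ n : ℕ, min (G z) n ^ r := le_iSup (fun n : ℕ => min (G z) n ^ r) n
    calc ∫⁻ z, G z ^ r ∂ρ = ∫⁻ z, ⨆ n : ℕ, min (G z) n ^ r ∂ρ :=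
          lintegral_congr fun z => (hsup z).symm
      _ = ⨆ n : ℕ, ∫⁻ z, min (G z) n ^ r ∂ρ := by
          refine lintegral_iSup (fun n => (hG.min measurable_const).pow_const r) ?_
          intro m n hmn z
          exact ENNReal.rpow_le_rpow (min_le_min le_rfl (by exact_mod_cast Nat.cast_le.mpr hmn)) hr0.le
      _ ≤ B := iSup_le hAn
  -- now split on p
  by_cases hptop : p = ∞
  · subst hptop
    have hgC : ∀ᵐ x ∂μ, g x ≤ eLpNormEssSup f μ := by
      filter_upwards [hgnorm, enorm_ae_le_eLpNormEssSup f μ] with x h1 h2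
      rw [h1]; exact h2
    have hGC : G ≤ᵐ[ρ] fun _ => eLpNormEssSup f μ := by
      refine ae_le_of_forall_setLIntegral_le_of_sigmaFinite₀ hG.aemeasurable ?_
      intro s hs _
      rw [hGset s, setLIntegral_const, hσapply s hs]
      have hae : ∀ᵐ w ∂Pm, g w.1 ≤ eLpNormEssSup f μ := by
        have hmap : ∀ᵐ x ∂(Pm.map Prod.fst), g x ≤ eLpNormEssSup f μ := by
          rw [hPmdef, Measure.map_fst_prod]
          simpa [measure_univ] using hgC
        exact ae_of_ae_map (f := (Prod.fst : Ed d × Ed d → Ed d))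
          measurable_fst.aemeasurable hmap
      calc ∫⁻ w in T ⁻¹' s, g w.1 ∂Pm ≤ ∫⁻ _ in T ⁻¹' s, eLpNormEssSup f μ ∂Pm :=
            lintegral_mono_ae (ae_restrict_of_ae hae)
        _ = eLpNormEssSup f μ * Pm (T ⁻¹' s) := setLIntegral_const _ _
        _ = eLpNormEssSup f μ * ρ s := by rw [hρ, Measure.map_apply hT hs]
    have hPfC : ∀ᵐ z ∂ρ, (‖Pf z‖₊ : ℝ≥0∞) ≤ eLpNormEssSup f μ := by
      filter_upwards [hdom, hGC] with z h1 h2 using h1.trans h2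
    have hbound : eLpNorm Pf ⊤ ρ ≤ eLpNorm f ⊤ μ := by
      rw [eLpNorm_exponent_top, eLpNorm_exponent_top]
      exact essSup_le_of_ae_le _ hPfC
    exact ⟨⟨hPfm, lt_of_le_of_lt hbound hf.2⟩, hbound⟩
  · -- finite p
    have hp0 : p ≠ 0 := by positivity
    set r : ℝ := p.toReal with hrdef
    have hr1 : 1 ≤ r := by
      rw [hrdef, ← ENNReal.toReal_one]
      exact ENNReal.toReal_mono hptop hp
    have hr0 : (0 : ℝ) < r := lt_of_lt_of_le one_pos hr1
    have hmain : ∫⁻ z, (‖Pf z‖₊ : ℝ≥0∞) ^ r ∂ρ ≤ ∫⁻ x, (‖f x‖₊ : ℝ≥0∞) ^ r ∂μ := by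
      have h1 : ∫⁻ z, (‖Pf z‖₊ : ℝ≥0∞) ^ r ∂ρ ≤ ∫⁻ z, G z ^ r ∂ρ := by
        refine lintegral_mono_ae (hdom.mono fun z hz => ENNReal.rpow_le_rpow hz hr0.le)
      have h3 : ∫⁻ x, g x ^ r ∂μ = ∫⁻ x, (‖f x‖₊ : ℝ≥0∞) ^ r ∂μ :=
        lintegral_congr_ae (hgnorm.mono fun x hx => by simp only [hx])
      rcases eq_or_lt_of_le hr1 with heq | hlt
      · refine h1.trans ?_
        have hr1' : r = 1 := heq.symm
        rw [← h3]
        simp only [hr1', ENNReal.rpow_one]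
        rw [Measure.lintegral_rnDeriv hσρ, hσuniv]
      · exact h1.trans ((hGr r hlt).trans_eq h3)
    have hbound : eLpNorm Pf p ρ ≤ eLpNorm f p μ := by
      rw [eLpNorm_eq_lintegral_rpow_enorm_toReal hp0 hptop, eLpNorm_eq_lintegral_rpow_enorm_toReal hp0 hptop]
      exact ENNReal.rpow_le_rpow hmain (by positivity)
    exact ⟨⟨hPfm, lt_of_le_of_lt hbound hf.2⟩, hbound⟩
end
end

section
/- Let μ be a compactly supported Borel probability measure on ℝ^d. If ν is a Bessel measure for μ, then for every r > 0 there exists a constant D > 0 such that ∫ sup_{|y|≤r} |(f dμ)^(x+y)|² dν(x) ≤ D ‖f‖²_{L²(μ)} for all f ∈ L²(μ). If ν is a frame measure for μ, then there exist constants δ > 0 and C > 0 such that C ‖f‖²_{L²(μ)} ≤ ∫ inf_{|y|≤δ} |(f dμ)^(x+y)|² dν(x) for all f ∈ L²(μ). -/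
open MeasureTheory Filter Metric Complex Set
open scoped ENNReal NNReal Real Topology

noncomputable section

namespace Stmt8

variable {d : ℕ}

lemma ofReal_norm_eq_coe_nnnorm {E : Type*} [SeminormedAddCommGroup E] (a : E) :
    ENNReal.ofReal ‖a‖ = (‖a‖₊ : ℝ≥0∞) := ENNReal.ofReal_eq_coe_nnreal (norm_nonneg a)

lemma coord_abs_le_norm (y : Ed d) (i : Fin d) : |y i| ≤ ‖y‖ := by
  rw [EuclideanSpace.norm_eq, show |y i| = Real.sqrt (y i ^ 2) from (Real.sqrt_sq_eq_abs _).symm]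
  apply Real.sqrt_le_sqrt
  calc y i ^ 2 = ‖y i‖ ^ 2 := by rw [Real.norm_eq_abs, _root_.sq_abs]
    _ ≤ _ := Finset.single_le_sum (fun j _ => sq_nonneg ‖y j‖) (Finset.mem_univ i)

lemma jlem {ι : Type*} (w u : ι → ℝ≥0∞) :
    (∑' i, w i * u i) ^ 2 ≤ 2 * (∑' i, w i) * ∑' i, w i * u i ^ 2 := by
  have key : ∀ i j, (w i * u i) * (w j * u j)
      ≤ w i * (w j * u j ^ 2) + (w i * u i ^ 2) * w j := by
    intro i j
    have huv : u i * u j ≤ u i ^ 2 + u j ^ 2 := by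
      rcases le_total (u i) (u j) with h | h
      · calc u i * u j ≤ u j * u j := mul_le_mul_left h _
          _ = u j ^ 2 := (sq _).symm
          _ ≤ _ := le_add_self
      · calc u i * u j ≤ u i * u i := mul_le_mul_right h _
          _ = u i ^ 2 := (sq _).symm
          _ ≤ _ := le_self_add
    calc (w i * u i) * (w j * u j) = (w i * w j) * (u i * u j) := by ring
      _ ≤ (w i * w j) * (u i ^ 2 + u j ^ 2) := mul_le_mul_right huv _
      _ = w i * (w j * u j ^ 2) + (w i * u i ^ 2) * w j := by ring
  calc (∑' i, w i * u i) ^ 2 = ∑' i, (w i * u i) * ∑' j, w j * u j := by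
        rw [sq, ← ENNReal.tsum_mul_right]
    _ = ∑' i, ∑' j, (w i * u i) * (w j * u j) := by
        refine tsum_congr fun i => ?_
        rw [ENNReal.tsum_mul_left]
    _ ≤ ∑' i, ∑' j, (w i * (w j * u j ^ 2) + (w i * u i ^ 2) * w j) :=
        ENNReal.tsum_le_tsum fun i => ENNReal.tsum_le_tsum fun j => key i j
    _ = ∑' i, (w i * ∑' j, (w j * u j ^ 2) + (w i * u i ^ 2) * ∑' j, w j) := by
        refine tsum_congr fun i => ?_
        rw [ENNReal.tsum_add, ENNReal.tsum_mul_left, ENNReal.tsum_mul_left]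
    _ = (∑' i, w i) * (∑' j, w j * u j ^ 2) + (∑' i, w i * u i ^ 2) * ∑' j, w j := by
        rw [ENNReal.tsum_add, ENNReal.tsum_mul_right, ENNReal.tsum_mul_right]
    _ = 2 * (∑' i, w i) * ∑' i, w i * u i ^ 2 := by ring
  
lemma tsum_ofReal_le {c : ℕ → ℝ} (h0 : ∀ n, 0 ≤ c n) {W : ℝ}
    (hW : ∀ N, ∑ n ∈ Finset.range N, c n ≤ W) :
    ∑' n, ENNReal.ofReal (c n) ≤ ENNReal.ofReal W := by
  refine ENNReal.summable.tsum_le_of_sum_range_le fun N => ?_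
  rw [← ENNReal.ofReal_sum_of_nonneg fun i _ => h0 i]
  exact ENNReal.ofReal_le_ofReal (hW N)

lemma sq_add_le (a b : ℝ≥0∞) : (a + b) ^ 2 ≤ 3 * a ^ 2 + 3 * b ^ 2 := by
  have hab : a * b ≤ a ^ 2 + b ^ 2 := by
    rcases le_total a b with h | h
    · calc a * b ≤ b * b := mul_le_mul_left h _
        _ = b ^ 2 := (sq _).symm
        _ ≤ _ := le_add_self
    · calc a * b ≤ a * a := mul_le_mul_right h _
        _ = a ^ 2 := (sq _).symm
        _ ≤ _ := le_self_add
  calc (a + b) ^ 2 = a ^ 2 + (a * b + a * b) + b ^ 2 := by ring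
    _ ≤ a ^ 2 + ((a ^ 2 + b ^ 2) + (a ^ 2 + b ^ 2)) + b ^ 2 :=
        add_le_add (add_le_add le_rfl (add_le_add hab hab)) le_rfl
    _ = 3 * a ^ 2 + 3 * b ^ 2 := by ring


-- ### kernel lemmas

lemma kernel_norm (c : ℝ) : ‖Complex.exp (-(2 * (Real.pi:ℂ) * (c:ℂ)) * Complex.I)‖ = 1 := by
  have h : (-(2 * (Real.pi:ℂ) * (c:ℂ)) : ℂ) = ((-(2 * Real.pi * c) : ℝ) : ℂ) := by push_cast; ring
  rw [h]
  simpa using Complex.norm_exp_ofReal_mul_I (-(2 * Real.pi * c))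

example {d : ℕ} (f : Ed d → ℂ) (t x : Ed d) :
    ‖f x * Complex.exp (-(2 * Real.pi * (inner ℝ t x : ℝ)) * Complex.I)‖ = ‖f x‖ := by
  rw [norm_mul, kernel_norm, mul_one]

lemma kernel_continuous_left {d : ℕ} (s : Ed d) :
    Continuous fun t : Ed d => Complex.exp (-(2 * Real.pi * (inner ℝ t s : ℝ)) * Complex.I) := by
  exact Complex.continuous_exp.comp
    (((continuous_const.mul (Complex.continuous_ofReal.comp (continuous_id.inner continuous_const))).neg).mul continuous_const)

lemma kernel_continuous_right {d : ℕ} (t : Ed d) :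
    Continuous fun s : Ed d => Complex.exp (-(2 * Real.pi * (inner ℝ t s : ℝ)) * Complex.I) := by
  exact Complex.continuous_exp.comp
    (((continuous_const.mul (Complex.continuous_ofReal.comp (continuous_const.inner continuous_id))).neg).mul continuous_const)

lemma ftm_continuous {d : ℕ} {μ : Measure (Ed d)} {h : Ed d → ℂ} (hh : Integrable h μ) :
    Continuous (ftm μ h) := by
  apply continuous_of_dominated (bound := fun s => ‖h s‖)
  · intro t
    exact hh.1.mul (kernel_continuous_right t).aestronglyMeasurable
  · intro t
    filter_upwards with s
    rw [norm_mul, kernel_norm, mul_one]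
  · exact hh.norm
  · filter_upwards with s
    exact continuous_const.mul (kernel_continuous_left s)

lemma ftm_norm_le {d : ℕ} {μ : Measure (Ed d)} {h : Ed d → ℂ} (x : Ed d) :
    ‖ftm μ h x‖ ≤ ∫ s, ‖h s‖ ∂μ := by
  refine (norm_integral_le_integral_norm _).trans (le_of_eq ?_)
  refine integral_congr_ae (Filter.Eventually.of_forall fun s => ?_)
  simp only [norm_mul, kernel_norm, mul_one]

-- ### gmul

def gmul {d : ℕ} (f : Ed d → ℂ) (n : ℕ) (a : Fin n → Fin d) : Ed d → ℂ :=
  fun t => f t * ∏ k, (t (a k) : ℂ)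

lemma pmul_continuous {d : ℕ} (n : ℕ) (a : Fin n → Fin d) :
    Continuous fun t : Ed d => ∏ k, (t (a k) : ℂ) := by
  refine continuous_finset_prod _ fun k _ => ?_
  exact Complex.continuous_ofReal.comp (EuclideanSpace.proj (a k)).continuous

lemma pmul_norm_le {d : ℕ} {M : ℝ} (hM0 : 0 ≤ M) {t : Ed d} (ht : ‖t‖ ≤ M)
    (n : ℕ) (a : Fin n → Fin d) : ‖∏ k, (t (a k) : ℂ)‖ ≤ M ^ n := by
  rw [norm_prod]
  calc ∏ k, ‖((t (a k) : ℝ) : ℂ)‖ ≤ ∏ _k : Fin n, M := by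
        refine Finset.prod_le_prod (fun k _ => norm_nonneg _) (fun k _ => ?_)
        rw [Complex.norm_real, Real.norm_eq_abs]
        exact (coord_abs_le_norm t (a k)).trans ht
    _ = M ^ n := by simp

variable {d : ℕ} {μ : Measure (Ed d)} {f : Ed d → ℂ} {M : ℝ}

lemma gmul_norm_ae (hM0 : 0 ≤ M) (hM : ∀ᵐ t ∂μ, ‖t‖ ≤ M) (f : Ed d → ℂ) (n : ℕ)
    (a : Fin n → Fin d) : ∀ᵐ t ∂μ, ‖gmul f n a t‖ ≤ M ^ n * ‖f t‖ := by
  filter_upwards [hM] with t ht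
  calc ‖gmul f n a t‖ = ‖f t‖ * ‖∏ k, (t (a k) : ℂ)‖ := norm_mul _ _
    _ ≤ ‖f t‖ * M ^ n := by
        exact mul_le_mul_of_nonneg_left (pmul_norm_le hM0 ht n a) (norm_nonneg _)
    _ = M ^ n * ‖f t‖ := mul_comm _ _

lemma gmul_integrable (hfi : Integrable f μ) (hM0 : 0 ≤ M) (hM : ∀ᵐ t ∂μ, ‖t‖ ≤ M)
    (n : ℕ) (a : Fin n → Fin d) : Integrable (gmul f n a) μ := by
  have h := hfi.bdd_mul (c := M ^ n) (pmul_continuous n a).aestronglyMeasurable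
    (by filter_upwards [hM] with t ht; exact pmul_norm_le hM0 ht n a)
  exact h.congr (Filter.Eventually.of_forall fun t => mul_comm _ _)

lemma gmul_memℒp (hf : MemLp f 2 μ) (hM0 : 0 ≤ M) (hM : ∀ᵐ t ∂μ, ‖t‖ ≤ M)
    (n : ℕ) (a : Fin n → Fin d) : MemLp (gmul f n a) 2 μ :=
  MemLp.of_le_mul hf (hf.1.mul (pmul_continuous n a).aestronglyMeasurable)
    (gmul_norm_ae hM0 hM f n a)

lemma gmul_lintegral_sq (hf : AEStronglyMeasurable f μ) (hM0 : 0 ≤ M)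
    (hM : ∀ᵐ t ∂μ, ‖t‖ ≤ M) (n : ℕ) (a : Fin n → Fin d) :
    ∫⁻ t, (‖gmul f n a t‖₊ : ℝ≥0∞) ^ 2 ∂μ
      ≤ ENNReal.ofReal (M ^ n) ^ 2 * ∫⁻ t, (‖f t‖₊ : ℝ≥0∞) ^ 2 ∂μ := by
  rw [← lintegral_const_mul' _ _ (ENNReal.pow_ne_top ENNReal.ofReal_ne_top)]
  refine lintegral_mono_ae ?_
  filter_upwards [gmul_norm_ae hM0 hM f n a] with t ht
  have h1 : (‖gmul f n a t‖₊ : ℝ≥0∞) ≤ ENNReal.ofReal (M ^ n) * ‖f t‖₊ := by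
    rw [← ofReal_norm_eq_coe_nnnorm, ← ofReal_norm_eq_coe_nnnorm (f t),
      ← ENNReal.ofReal_mul (by positivity)]
    exact ENNReal.ofReal_le_ofReal ht
  calc (‖gmul f n a t‖₊ : ℝ≥0∞) ^ 2 ≤ (ENNReal.ofReal (M ^ n) * ‖f t‖₊) ^ 2 :=
        pow_le_pow_left' h1 2
    _ = ENNReal.ofReal (M ^ n) ^ 2 * (‖f t‖₊ : ℝ≥0∞) ^ 2 := mul_pow _ _ 2

lemma gmul_integral_norm_le (hfi : Integrable f μ) (hM0 : 0 ≤ M)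
    (hM : ∀ᵐ t ∂μ, ‖t‖ ≤ M) (n : ℕ) (a : Fin n → Fin d) :
    ∫ t, ‖gmul f n a t‖ ∂μ ≤ M ^ n * ∫ t, ‖f t‖ ∂μ := by
  refine (integral_mono_ae (gmul_integrable hfi hM0 hM n a).norm (hfi.norm.const_mul _)
    (gmul_norm_ae hM0 hM f n a)).trans (le_of_eq ?_)
  exact integral_const_mul _ _

-- ### series expansion

lemma exp_series (z : ℂ) : Complex.exp z = ∑' n : ℕ, z ^ n / n.factorial := by
  rw [Complex.exp_eq_exp_ℂ, NormedSpace.exp_eq_tsum_div]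

lemma inner_cast (y s : Ed d) : ((inner ℝ y s : ℝ) : ℂ) = ∑ i, (y i : ℂ) * (s i : ℂ) := by
  have h : (inner ℝ y s : ℝ) = ∑ i, y i * s i := by
    simp [PiLp.inner_apply, RCLike.inner_apply, conj_trivial, mul_comm]
  rw [h]
  push_cast
  rfl

lemma sum_pow_expand (n : ℕ) (b : Fin d → ℂ) :
    (∑ i, b i) ^ n = ∑ a : Fin n → Fin d, ∏ k, b (a k) := by
  classical
  rw [show (∑ i, b i) ^ n = ∏ _k : Fin n, (∑ i, b i) from by simp [Finset.prod_const]]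
  rw [Finset.prod_univ_sum]
  simp

lemma z_norm (r : ℝ) : ‖(-(2 * (Real.pi : ℂ) * (r : ℂ)) * Complex.I)‖ = 2 * Real.pi * |r| := by
  simp [norm_mul, Complex.norm_real, Real.norm_eq_abs, _root_.abs_of_nonneg Real.pi_pos.le]

def Tterm {d : ℕ} (μ : Measure (Ed d)) (f : Ed d → ℂ) (x y : Ed d) (n : ℕ) : ℂ :=
  ((-(2 * (Real.pi : ℂ)) * Complex.I) ^ n / n.factorial) *
    ∑ a : Fin n → Fin d, (∏ k, (y (a k) : ℂ)) * ftm μ (gmul f n a) x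

lemma Hnorm_le {y : Ed d} {s : Ed d} (hs : ‖s‖ ≤ M) (hM0 : 0 ≤ M) (w : ℂ) (n : ℕ) :
    ‖w * ((-(2 * (Real.pi : ℂ) * ((inner ℝ y s : ℝ) : ℂ)) * Complex.I) ^ n / n.factorial)‖
      ≤ ‖w‖ * ((2 * Real.pi * ‖y‖ * M) ^ n / n.factorial) := by
  have hr : 2 * Real.pi * |(inner ℝ y s : ℝ)| ≤ 2 * Real.pi * ‖y‖ * M := by
    calc 2 * Real.pi * |(inner ℝ y s : ℝ)| ≤ 2 * Real.pi * (‖y‖ * ‖s‖) := by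
          have h := abs_real_inner_le_norm y s
          have h2 : (0:ℝ) ≤ 2 * Real.pi := by positivity
          nlinarith
      _ ≤ 2 * Real.pi * (‖y‖ * M) := by
          have h2 : (0:ℝ) ≤ 2 * Real.pi := by positivity
          have h3 : ‖y‖ * ‖s‖ ≤ ‖y‖ * M := mul_le_mul_of_nonneg_left hs (norm_nonneg _)
          nlinarith
      _ = 2 * Real.pi * ‖y‖ * M := by ring
  rw [norm_mul, norm_div, norm_pow, z_norm, Complex.norm_natCast]
  gcongr

lemma expansion {μ : Measure (Ed d)} [IsFiniteMeasure μ] (hM0 : 0 ≤ M)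
    (hM : ∀ᵐ t ∂μ, ‖t‖ ≤ M) (hfi : Integrable f μ) (x y : Ed d) :
    ftm μ f (x + y) = ∑' n, Tterm μ f x y n := by
  classical
  set E : Ed d → ℂ := fun s => Complex.exp (-(2 * Real.pi * (inner ℝ x s : ℝ)) * Complex.I)
    with hE
  set H : ℕ → Ed d → ℂ := fun n s =>
    (f s * E s) * ((-(2 * (Real.pi : ℂ) * ((inner ℝ y s : ℝ) : ℂ)) * Complex.I) ^ n / n.factorial)
    with hH
  have hpt : ∀ s, f s * Complex.exp (-(2 * Real.pi * (inner ℝ (x + y) s : ℝ)) * Complex.I)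
      = ∑' n, H n s := by
    intro s
    have hsplit : (-(2 * (Real.pi : ℂ) * ((inner ℝ (x + y) s : ℝ) : ℂ)) * Complex.I)
        = (-(2 * (Real.pi : ℂ) * ((inner ℝ x s : ℝ) : ℂ)) * Complex.I)
          + (-(2 * (Real.pi : ℂ) * ((inner ℝ y s : ℝ) : ℂ)) * Complex.I) := by
      have h : ((inner ℝ (x + y) s : ℝ) : ℂ) = ((inner ℝ x s : ℝ) : ℂ) + ((inner ℝ y s : ℝ) : ℂ) := by
        rw [show (inner ℝ (x + y) s : ℝ) = (inner ℝ x s : ℝ) + (inner ℝ y s : ℝ) from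
          inner_add_left x y s]
        push_cast; rfl
      rw [h]; ring
    rw [show f s * Complex.exp (-(2 * Real.pi * (inner ℝ (x + y) s : ℝ)) * Complex.I)
        = (f s * E s) * Complex.exp
            (-(2 * (Real.pi : ℂ) * ((inner ℝ y s : ℝ) : ℂ)) * Complex.I) from by
      rw [hE]; rw [hsplit, Complex.exp_add]; ring]
    rw [exp_series]
    simp only [hH]
    exact (tsum_mul_left).symm
  have hccy : ∀ n : ℕ, Continuous fun s : Ed d =>
      ((-(2 * (Real.pi : ℂ) * ((inner ℝ y s : ℝ) : ℂ)) * Complex.I) ^ n / n.factorial) := by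
    intro n
    exact (((((continuous_const.mul (Complex.continuous_ofReal.comp
      (continuous_const.inner continuous_id))).neg).mul continuous_const)).pow n).div_const _
  have hmeas : ∀ n, AEStronglyMeasurable (H n) μ := fun n =>
    (hfi.1.mul (kernel_continuous_right x).aestronglyMeasurable).mul
      (hccy n).aestronglyMeasurable
  have hbound : ∀ n, ∫⁻ s, (‖H n s‖₊ : ℝ≥0∞) ∂μ
      ≤ ENNReal.ofReal ((2 * Real.pi * ‖y‖ * M) ^ n / n.factorial) * ∫⁻ s, (‖f s‖₊ : ℝ≥0∞) ∂μ := by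
    intro n
    rw [← lintegral_const_mul' _ _ ENNReal.ofReal_ne_top]
    refine lintegral_mono_ae ?_
    filter_upwards [hM] with s hs
    have h1 : ‖H n s‖ ≤ (2 * Real.pi * ‖y‖ * M) ^ n / n.factorial * ‖f s‖ := by
      simp only [hH]
      refine (Hnorm_le hs hM0 _ n).trans (le_of_eq ?_)
      rw [norm_mul, hE, kernel_norm, mul_one, mul_comm]
    calc (‖H n s‖₊ : ℝ≥0∞) = ENNReal.ofReal ‖H n s‖ := (ofReal_norm_eq_coe_nnnorm _).symm
      _ ≤ ENNReal.ofReal ((2 * Real.pi * ‖y‖ * M) ^ n / n.factorial * ‖f s‖) :=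
          ENNReal.ofReal_le_ofReal h1
      _ = _ := by rw [ENNReal.ofReal_mul (by positivity), ofReal_norm_eq_coe_nnnorm]
  have hsum : ∑' n, ∫⁻ s, (‖H n s‖₊ : ℝ≥0∞) ∂μ ≠ ⊤ := by
    refine ne_top_of_le_ne_top ?_ (ENNReal.tsum_le_tsum hbound)
    rw [ENNReal.tsum_mul_right]
    have h2 : (∑' n : ℕ, ENNReal.ofReal ((2 * Real.pi * ‖y‖ * M) ^ n / n.factorial))
        ≤ ENNReal.ofReal (Real.exp (2 * Real.pi * ‖y‖ * M)) :=
      tsum_ofReal_le (fun n => by positivity)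
        (Real.sum_le_exp_of_nonneg (by positivity))
    exact ENNReal.mul_ne_top (h2.trans_lt ENNReal.ofReal_lt_top).ne hfi.2.ne
  have hterm : ∀ n, ∫ s, H n s ∂μ = Tterm μ f x y n := by
    intro n
    have hintg : ∀ a : Fin n → Fin d, Integrable (fun s => gmul f n a s * E s) μ := by
      intro a
      have h := (gmul_integrable hfi hM0 hM n a).bdd_mul (c := 1)
        (kernel_continuous_right x).aestronglyMeasurable
        (Filter.Eventually.of_forall fun s => le_of_eq (kernel_norm _))
      exact h.congr (Filter.Eventually.of_forall fun s => mul_comm _ _)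
    have hid : ∀ s, H n s = ∑ a : Fin n → Fin d,
        ((((-(2 * (Real.pi : ℂ)) * Complex.I) ^ n / n.factorial) * ∏ k, (y (a k) : ℂ))
          * (gmul f n a s * E s)) := by
      intro s
      simp only [hH]
      have hz : (-(2 * (Real.pi : ℂ) * ((inner ℝ y s : ℝ) : ℂ)) * Complex.I)
          = (-(2 * (Real.pi : ℂ)) * Complex.I) * ((inner ℝ y s : ℝ) : ℂ) := by ring
      rw [hz, mul_pow, inner_cast, sum_pow_expand, Finset.mul_sum, Finset.sum_div, Finset.mul_sum]
      refine Finset.sum_congr rfl fun a _ => ?_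
      rw [Finset.prod_mul_distrib]
      simp only [gmul]
      ring
    calc ∫ s, H n s ∂μ
        = ∫ s, ∑ a : Fin n → Fin d,
            ((((-(2 * (Real.pi : ℂ)) * Complex.I) ^ n / n.factorial) * ∏ k, (y (a k) : ℂ))
              * (gmul f n a s * E s)) ∂μ :=
          integral_congr_ae (Filter.Eventually.of_forall hid)
      _ = ∑ a : Fin n → Fin d,
            ∫ s, ((((-(2 * (Real.pi : ℂ)) * Complex.I) ^ n / n.factorial) * ∏ k, (y (a k) : ℂ))
              * (gmul f n a s * E s)) ∂μ :=
          integral_finset_sum _ (fun a _ => (hintg a).const_mul _)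
      _ = ∑ a : Fin n → Fin d,
            ((((-(2 * (Real.pi : ℂ)) * Complex.I) ^ n / n.factorial) * ∏ k, (y (a k) : ℂ))
              * ftm μ (gmul f n a) x) := by
          refine Finset.sum_congr rfl fun a _ => ?_
          rw [integral_const_mul]
          rfl
      _ = Tterm μ f x y n := by
          rw [Tterm, Finset.mul_sum]
          exact Finset.sum_congr rfl fun a _ => by ring
  calc ftm μ f (x + y) = ∫ s, ∑' n, H n s ∂μ := by
        unfold ftm
        exact integral_congr_ae (Filter.Eventually.of_forall hpt)
    _ = ∑' n, ∫ s, H n s ∂μ := integral_tsum hmeas hsum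
    _ = ∑' n, Tterm μ f x y n := tsum_congr hterm

-- ### term bounds

lemma Tterm_zero (μ : Measure (Ed d)) (f : Ed d → ℂ) (x y : Ed d) :
    Tterm μ f x y 0 = ftm μ f x := by
  rw [Tterm, Fintype.sum_unique]
  simp [gmul, ftm]

lemma Tterm_norm_le (μ : Measure (Ed d)) {y : Ed d} {r : ℝ} (hy : ‖y‖ ≤ r)
    (f : Ed d → ℂ) (x : Ed d) (n : ℕ) :
    ‖Tterm μ f x y n‖ ≤ (2 * Real.pi * r) ^ n / n.factorial
      * ∑ a : Fin n → Fin d, ‖ftm μ (gmul f n a) x‖ := by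
  have hr0 : 0 ≤ r := le_trans (norm_nonneg y) hy
  rw [Tterm, norm_mul, norm_div, norm_pow, Complex.norm_natCast]
  have hc : ‖-(2 * (Real.pi : ℂ)) * Complex.I‖ = 2 * Real.pi := by
    simp [norm_mul, _root_.abs_of_nonneg Real.pi_pos.le]
  rw [hc]
  have h1 : ‖∑ a : Fin n → Fin d, (∏ k, (y (a k) : ℂ)) * ftm μ (gmul f n a) x‖
      ≤ ∑ a : Fin n → Fin d, r ^ n * ‖ftm μ (gmul f n a) x‖ := by
    refine (norm_sum_le _ _).trans (Finset.sum_le_sum fun a _ => ?_)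
    rw [norm_mul]
    refine mul_le_mul_of_nonneg_right ?_ (norm_nonneg _)
    rw [norm_prod]
    calc ∏ k, ‖((y (a k) : ℝ) : ℂ)‖ ≤ ∏ _k : Fin n, r := by
          refine Finset.prod_le_prod (fun k _ => norm_nonneg _) (fun k _ => ?_)
          rw [Complex.norm_real, Real.norm_eq_abs]
          exact (coord_abs_le_norm y _).trans hy
      _ = r ^ n := by simp
  calc (2 * Real.pi) ^ n / n.factorial
        * ‖∑ a : Fin n → Fin d, (∏ k, (y (a k) : ℂ)) * ftm μ (gmul f n a) x‖
      ≤ (2 * Real.pi) ^ n / n.factorial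
        * ∑ a : Fin n → Fin d, r ^ n * ‖ftm μ (gmul f n a) x‖ :=
        mul_le_mul_of_nonneg_left h1 (by positivity)
    _ = (2 * Real.pi * r) ^ n / n.factorial * ∑ a : Fin n → Fin d, ‖ftm μ (gmul f n a) x‖ := by
        rw [← Finset.mul_sum, mul_pow, mul_pow]
        ring

lemma Tterm_nnnorm_le (μ : Measure (Ed d)) {y : Ed d} {r : ℝ} (hy : ‖y‖ ≤ r)
    (f : Ed d → ℂ) (x : Ed d) (n : ℕ) :
    (‖Tterm μ f x y n‖₊ : ℝ≥0∞) ≤ ENNReal.ofReal ((2 * Real.pi * r) ^ n / n.factorial)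
      * ∑ a : Fin n → Fin d, (‖ftm μ (gmul f n a) x‖₊ : ℝ≥0∞) := by
  have hr0 : 0 ≤ r := le_trans (norm_nonneg y) hy
  rw [← ofReal_norm_eq_coe_nnnorm]
  refine (ENNReal.ofReal_le_ofReal (Tterm_norm_le μ hy f x n)).trans (le_of_eq ?_)
  rw [ENNReal.ofReal_mul (by positivity),
    ENNReal.ofReal_sum_of_nonneg (fun a _ => norm_nonneg _)]
  congr 1
  exact Finset.sum_congr rfl fun a _ => ofReal_norm_eq_coe_nnnorm _

lemma Tterm_summable {μ : Measure (Ed d)} [IsFiniteMeasure μ] (hM0 : 0 ≤ M)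
    (hM : ∀ᵐ t ∂μ, ‖t‖ ≤ M) (hfi : Integrable f μ) {y : Ed d} {r : ℝ} (hy : ‖y‖ ≤ r)
    (x : Ed d) : Summable fun n => ‖Tterm μ f x y n‖ := by
  have hr0 : 0 ≤ r := le_trans (norm_nonneg y) hy
  set C : ℝ := ∫ s, ‖f s‖ ∂μ with hC
  have hC0 : 0 ≤ C := integral_nonneg fun s => norm_nonneg _
  have hG : ∀ n (a : Fin n → Fin d), ‖ftm μ (gmul f n a) x‖ ≤ M ^ n * C := fun n a =>
    (ftm_norm_le x).trans (gmul_integral_norm_le hfi hM0 hM n a)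
  have hsummable : Summable fun n : ℕ =>
      (2 * Real.pi * r * (M * d)) ^ n / n.factorial * C :=
    (Real.summable_pow_div_factorial _).mul_right C
  refine Summable.of_nonneg_of_le (fun n => norm_nonneg _) (fun n => ?_) hsummable
  refine (Tterm_norm_le μ hy f x n).trans ?_
  have h2 : ∑ a : Fin n → Fin d, ‖ftm μ (gmul f n a) x‖ ≤ (d ^ n : ℕ) • (M ^ n * C) := by
    refine (Finset.sum_le_card_nsmul _ _ _ (fun a _ => hG n a)).trans (le_of_eq ?_)
    congr 1
    · rw [Finset.card_univ, Fintype.card_fun, Fintype.card_fin, Fintype.card_fin]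
  calc (2 * Real.pi * r) ^ n / n.factorial * ∑ a : Fin n → Fin d, ‖ftm μ (gmul f n a) x‖
      ≤ (2 * Real.pi * r) ^ n / n.factorial * ((d ^ n : ℕ) • (M ^ n * C)) :=
        mul_le_mul_of_nonneg_left h2 (by positivity)
    _ = (2 * Real.pi * r * (M * d)) ^ n / n.factorial * C := by
        rw [nsmul_eq_mul]
        push_cast
        rw [mul_pow, mul_pow, mul_pow]
        ring

lemma pointwise_sup {μ : Measure (Ed d)} [IsFiniteMeasure μ] (hM0 : 0 ≤ M)
    (hM : ∀ᵐ t ∂μ, ‖t‖ ≤ M) (hfi : Integrable f μ) {y : Ed d} {r : ℝ} (hy : ‖y‖ ≤ r)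
    (x : Ed d) :
    (‖ftm μ f (x + y)‖₊ : ℝ≥0∞) ≤ ∑' n : ℕ, ENNReal.ofReal ((2 * Real.pi * r) ^ n / n.factorial)
      * ∑ a : Fin n → Fin d, (‖ftm μ (gmul f n a) x‖₊ : ℝ≥0∞) := by
  have hs := Tterm_summable hM0 hM hfi hy x
  rw [expansion hM0 hM hfi x y, ← ofReal_norm_eq_coe_nnnorm]
  refine le_trans (ENNReal.ofReal_le_ofReal (norm_tsum_le_tsum_norm hs)) ?_
  rw [ENNReal.ofReal_tsum_of_nonneg (fun n => norm_nonneg _) hs]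
  refine ENNReal.tsum_le_tsum fun n => ?_
  rw [ofReal_norm_eq_coe_nnnorm]
  exact Tterm_nnnorm_le μ hy f x n

lemma pointwise_diff {μ : Measure (Ed d)} [IsFiniteMeasure μ] (hM0 : 0 ≤ M)
    (hM : ∀ᵐ t ∂μ, ‖t‖ ≤ M) (hfi : Integrable f μ) {y : Ed d} {r : ℝ} (hy : ‖y‖ ≤ r)
    (x : Ed d) :
    (‖ftm μ f (x + y) - ftm μ f x‖₊ : ℝ≥0∞)
      ≤ ∑' n : ℕ, ENNReal.ofReal (if n = 0 then 0 else (2 * Real.pi * r) ^ n / n.factorial)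
          * ∑ a : Fin n → Fin d, (‖ftm μ (gmul f n a) x‖₊ : ℝ≥0∞) := by
  have hs := Tterm_summable hM0 hM hfi hy x
  have hdiff : ftm μ f (x + y) - ftm μ f x = ∑' n : ℕ, Tterm μ f x y (n + 1) := by
    rw [expansion hM0 hM hfi x y, hs.of_norm.tsum_eq_zero_add, Tterm_zero]
    ring
  have hs1 : Summable fun n => ‖Tterm μ f x y (n + 1)‖ := (summable_nat_add_iff 1).mpr hs
  rw [hdiff, ← ofReal_norm_eq_coe_nnnorm]
  refine le_trans (ENNReal.ofReal_le_ofReal (norm_tsum_le_tsum_norm hs1)) ?_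
  rw [ENNReal.ofReal_tsum_of_nonneg (fun n => norm_nonneg _) hs1]
  refine Summable.tsum_le_tsum_of_inj (fun n => n + 1) (fun a b h => Nat.succ_injective h)
    (fun c _ => zero_le) (fun n => ?_) ENNReal.summable ENNReal.summable
  rw [ofReal_norm_eq_coe_nnnorm, if_neg (Nat.succ_ne_zero n)]
  exact Tterm_nnnorm_le μ hy f x (n + 1)

-- ### core integrated bound

lemma core {μ ν : Measure (Ed d)} [IsFiniteMeasure μ] {B : ℝ}
    (hB : IsBesselBound μ ν B) (hM1 : 1 ≤ M) (hM : ∀ᵐ t ∂μ, ‖t‖ ≤ M)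
    (hf : MemLp f 2 μ) (hfi : Integrable f μ)
    (ρ : ℕ → ℝ) (hρ : ∀ n, 0 ≤ ρ n) {W : ℝ}
    (hW : ∀ N, ∑ n ∈ Finset.range N, (M * d) ^ n * ρ n ≤ W) :
    ∫⁻ x, (∑' n : ℕ, ENNReal.ofReal (ρ n)
        * ∑ a : Fin n → Fin d, (‖ftm μ (gmul f n a) x‖₊ : ℝ≥0∞)) ^ 2 ∂ν
      ≤ 2 * ENNReal.ofReal W * ENNReal.ofReal W * ENNReal.ofReal B
          * ∫⁻ t, (‖f t‖₊ : ℝ≥0∞) ^ 2 ∂μ := by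
  have hM0 : 0 ≤ M := le_trans zero_le_one hM1
  have hMn : ∀ n : ℕ, (0:ℝ) < M ^ n := fun n => pow_pos (lt_of_lt_of_le zero_lt_one hM1) n
  set w : ((n : ℕ) × (Fin n → Fin d)) → ℝ≥0∞ :=
    fun p => ENNReal.ofReal (ρ p.1 * M ^ p.1) with hw
  set u : ((n : ℕ) × (Fin n → Fin d)) → Ed d → ℝ≥0∞ :=
    fun p x => ENNReal.ofReal ((M ^ p.1)⁻¹) * (‖ftm μ (gmul f p.1 p.2) x‖₊ : ℝ≥0∞) with hu
  have hwu : ∀ x, (∑' n : ℕ, ENNReal.ofReal (ρ n)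
      * ∑ a : Fin n → Fin d, (‖ftm μ (gmul f n a) x‖₊ : ℝ≥0∞))
      = ∑' p : (n : ℕ) × (Fin n → Fin d), w p * u p x := by
    intro x
    rw [ENNReal.tsum_sigma']
    refine tsum_congr fun n => ?_
    rw [tsum_fintype, Finset.mul_sum]
    refine Finset.sum_congr rfl fun a _ => ?_
    simp only [hw, hu]
    rw [← mul_assoc, ← ENNReal.ofReal_mul (mul_nonneg (hρ n) (hMn n).le)]
    congr 2
    field_simp
  have hWsum : ∑' p : (n : ℕ) × (Fin n → Fin d), w p ≤ ENNReal.ofReal W := by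
    rw [ENNReal.tsum_sigma']
    have h1 : ∀ n : ℕ, (∑' a : Fin n → Fin d, w ⟨n, a⟩)
        = ENNReal.ofReal ((M * d) ^ n * ρ n) := by
      intro n
      rw [tsum_fintype]
      simp only [hw]
      rw [Finset.sum_const, Finset.card_univ, Fintype.card_fun,
        Fintype.card_fin, Fintype.card_fin, nsmul_eq_mul,
        ← ENNReal.ofReal_natCast (d ^ n), ← ENNReal.ofReal_mul (by positivity)]
      congr 1
      push_cast
      ring
    rw [show (∑' n : ℕ, ∑' a : Fin n → Fin d, w ⟨n, a⟩)
        = ∑' n : ℕ, ENNReal.ofReal ((M * d) ^ n * ρ n) from tsum_congr h1]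
    exact tsum_ofReal_le
      (fun n => mul_nonneg (pow_nonneg (by positivity) n) (hρ n)) hW
  have hWne : (∑' p : (n : ℕ) × (Fin n → Fin d), w p) ≠ ⊤ :=
    (hWsum.trans_lt ENNReal.ofReal_lt_top).ne
  have hup : ∀ p : (n : ℕ) × (Fin n → Fin d),
      ∫⁻ x, (u p x) ^ 2 ∂ν ≤ ENNReal.ofReal B * ∫⁻ t, (‖f t‖₊ : ℝ≥0∞) ^ 2 ∂μ := by
    rintro ⟨n, a⟩
    have h1 : ∀ x, (u ⟨n, a⟩ x) ^ 2
        = ENNReal.ofReal ((M ^ n)⁻¹) ^ 2 * (‖ftm μ (gmul f n a) x‖₊ : ℝ≥0∞) ^ 2 := fun x => by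
      simp only [hu]
      exact mul_pow _ _ 2
    calc ∫⁻ x, (u ⟨n, a⟩ x) ^ 2 ∂ν
        = ENNReal.ofReal ((M ^ n)⁻¹) ^ 2 * ∫⁻ x, (‖ftm μ (gmul f n a) x‖₊ : ℝ≥0∞) ^ 2 ∂ν := by
          simp only [h1]
          exact lintegral_const_mul' _ _ (ENNReal.pow_ne_top ENNReal.ofReal_ne_top)
      _ ≤ ENNReal.ofReal ((M ^ n)⁻¹) ^ 2
          * (ENNReal.ofReal B * ∫⁻ t, (‖gmul f n a t‖₊ : ℝ≥0∞) ^ 2 ∂μ) :=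
          mul_le_mul_right (hB _ (gmul_memℒp hf hM0 hM n a)) _
      _ ≤ ENNReal.ofReal ((M ^ n)⁻¹) ^ 2
          * (ENNReal.ofReal B * (ENNReal.ofReal (M ^ n) ^ 2 * ∫⁻ t, (‖f t‖₊ : ℝ≥0∞) ^ 2 ∂μ)) :=
          mul_le_mul_right (mul_le_mul_right (gmul_lintegral_sq hf.1 hM0 hM n a) _) _
      _ = (ENNReal.ofReal ((M ^ n)⁻¹) * ENNReal.ofReal (M ^ n)) ^ 2
          * (ENNReal.ofReal B * ∫⁻ t, (‖f t‖₊ : ℝ≥0∞) ^ 2 ∂μ) := by ring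
      _ = ENNReal.ofReal B * ∫⁻ t, (‖f t‖₊ : ℝ≥0∞) ^ 2 ∂μ := by
          rw [← ENNReal.ofReal_mul (by positivity), inv_mul_cancel₀ (hMn n).ne',
            ENNReal.ofReal_one, one_pow, one_mul]
  have hmeasp : ∀ p : (n : ℕ) × (Fin n → Fin d), Measurable fun x => w p * (u p x) ^ 2 := by
    rintro ⟨n, a⟩
    have hc : Continuous (ftm μ (gmul f n a)) := ftm_continuous (gmul_integrable hfi hM0 hM n a)
    exact (((hc.measurable.nnnorm.coe_nnreal_ennreal.const_mul _).pow_const 2).const_mul _)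
  calc ∫⁻ x, (∑' n : ℕ, ENNReal.ofReal (ρ n)
        * ∑ a : Fin n → Fin d, (‖ftm μ (gmul f n a) x‖₊ : ℝ≥0∞)) ^ 2 ∂ν
      ≤ ∫⁻ x, 2 * (∑' p : (n : ℕ) × (Fin n → Fin d), w p)
          * ∑' p : (n : ℕ) × (Fin n → Fin d), w p * (u p x) ^ 2 ∂ν := by
        refine lintegral_mono fun x => ?_
        rw [hwu x]
        exact jlem w (fun p => u p x)
    _ = 2 * (∑' p : (n : ℕ) × (Fin n → Fin d), w p)
        * ∫⁻ x, ∑' p : (n : ℕ) × (Fin n → Fin d), w p * (u p x) ^ 2 ∂ν :=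
        lintegral_const_mul' _ _ (ENNReal.mul_ne_top (by norm_num) hWne)
    _ = 2 * (∑' p : (n : ℕ) × (Fin n → Fin d), w p)
        * ∑' p : (n : ℕ) × (Fin n → Fin d), ∫⁻ x, w p * (u p x) ^ 2 ∂ν := by
        rw [lintegral_tsum fun p => (hmeasp p).aemeasurable]
    _ ≤ 2 * (∑' p : (n : ℕ) × (Fin n → Fin d), w p)
        * ∑' p : (n : ℕ) × (Fin n → Fin d),
            w p * (ENNReal.ofReal B * ∫⁻ t, (‖f t‖₊ : ℝ≥0∞) ^ 2 ∂μ) := by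
        refine mul_le_mul_right (ENNReal.tsum_le_tsum fun p => ?_) _
        rw [lintegral_const_mul' _ _ ENNReal.ofReal_ne_top]
        exact mul_le_mul_right (hup p) _
    _ = 2 * ((∑' p : (n : ℕ) × (Fin n → Fin d), w p)
        * (∑' p : (n : ℕ) × (Fin n → Fin d), w p))
        * (ENNReal.ofReal B * ∫⁻ t, (‖f t‖₊ : ℝ≥0∞) ^ 2 ∂μ) := by
        rw [ENNReal.tsum_mul_right]
        ring
    _ ≤ 2 * (ENNReal.ofReal W * ENNReal.ofReal W)
        * (ENNReal.ofReal B * ∫⁻ t, (‖f t‖₊ : ℝ≥0∞) ^ 2 ∂μ) := by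
        gcongr
    _ = 2 * ENNReal.ofReal W * ENNReal.ofReal W * ENNReal.ofReal B
        * ∫⁻ t, (‖f t‖₊ : ℝ≥0∞) ^ 2 ∂μ := by ring

-- ### final helpers

lemma sum_range_if_le {x : ℝ} (hx : 0 ≤ x) (N : ℕ) :
    ∑ n ∈ Finset.range N, (if n = 0 then 0 else x ^ n / n.factorial) ≤ x * Real.exp x := by
  cases N with
  | zero => simp; positivity
  | succ N =>
    rw [Finset.sum_range_succ']
    norm_num
    have h1 : ∀ i : ℕ, (if i + 1 = 0 then (0:ℝ) else x ^ (i+1) / (i+1).factorial)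
        ≤ x * (x ^ i / i.factorial) := by
      intro i
      rw [if_neg (Nat.succ_ne_zero i)]
      have hfac : (i.factorial : ℝ) ≤ ((i+1).factorial : ℝ) := by
        exact_mod_cast Nat.factorial_le (Nat.le_succ i)
      calc x ^ (i+1) / ((i+1).factorial : ℝ) ≤ x ^ (i+1) / (i.factorial : ℝ) := by
            have hpos : (0:ℝ) < (i.factorial : ℝ) := by
              exact_mod_cast Nat.factorial_pos i
            gcongr
        _ = x * (x ^ i / i.factorial) := by rw [pow_succ]; ring
    calc ∑ i ∈ Finset.range N, (if i + 1 = 0 then (0:ℝ) else x ^ (i+1) / (i+1).factorial)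
        ≤ ∑ i ∈ Finset.range N, x * (x ^ i / i.factorial) :=
          Finset.sum_le_sum fun i _ => h1 i
      _ = x * ∑ i ∈ Finset.range N, (x ^ i / i.factorial) := by rw [Finset.mul_sum]
      _ ≤ x * Real.exp x :=
          mul_le_mul_of_nonneg_left (Real.sum_le_exp_of_nonneg hx N) hx

lemma lintegral_sq_ne_top {μ : Measure (Ed d)} (hf : MemLp f 2 μ) :
    ∫⁻ t, (‖f t‖₊ : ℝ≥0∞) ^ 2 ∂μ ≠ ⊤ := by
  have h := hf.2
  rw [eLpNorm_eq_lintegral_rpow_enorm_toReal (by norm_num) (by norm_num)] at h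
  have h2 : (∫⁻ t, (‖f t‖₊ : ℝ≥0∞) ^ (2:ℝ≥0∞).toReal ∂μ) < ⊤ := by
    refine (ENNReal.rpow_lt_top_iff_of_pos ?_).1 h
    norm_num
  refine ne_of_lt ?_
  convert h2 using 1
  refine lintegral_congr fun t => ?_
  rw [show ((2:ℝ≥0∞).toReal) = ((2:ℕ):ℝ) from by norm_num, ENNReal.rpow_natCast]

def rho2 (δ : ℝ) : ℕ → ℝ := fun n => if n = 0 then 0 else (2 * Real.pi * δ) ^ n / n.factorial

def Sfun (μ : Measure (Ed d)) (f : Ed d → ℂ) (δ : ℝ) : Ed d → ℝ≥0∞ := fun x =>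
  ∑' n : ℕ, ENNReal.ofReal (rho2 δ n)
    * ∑ a : Fin n → Fin d, (‖ftm μ (gmul f n a) x‖₊ : ℝ≥0∞)

end Stmt8

open Stmt8 in
/-- Stability: if `ν` is a Bessel measure for the compactly supported probability measure `μ`,
then for every `r > 0` there is `D > 0` with
`∫ sup_{|y|≤r} |(f dμ)^(x+y)|² dν(x) ≤ D‖f‖²_{L²(μ)}`; if `ν` is a frame measure then there are
`δ, C > 0` with `C‖f‖²_{L²(μ)} ≤ ∫ inf_{|y|≤δ} |(f dμ)^(x+y)|² dν(x)`. -/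
theorem stmt8 {d : ℕ} (μ : Measure (Ed d)) [IsProbabilityMeasure μ]
    (hμc : ∃ K : Set (Ed d), IsCompact K ∧ μ Kᶜ = 0) (ν : Measure (Ed d)) :
    ((∃ B > (0 : ℝ), IsBesselBound μ ν B) → ∀ r > (0 : ℝ), ∃ D > (0 : ℝ),
      ∀ f : Ed d → ℂ, MemLp f 2 μ →
        ∫⁻ x, ⨆ y ∈ Metric.closedBall (0 : Ed d) r, (‖ftm μ f (x + y)‖₊ : ℝ≥0∞) ^ 2 ∂ν ≤
          ENNReal.ofReal D * ∫⁻ x, (‖f x‖₊ : ℝ≥0∞) ^ 2 ∂μ) ∧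
    ((∃ A B : ℝ, 0 < A ∧ 0 < B ∧ IsFrameBounds μ ν A B) → ∃ δ > (0 : ℝ), ∃ C > (0 : ℝ),
      ∀ f : Ed d → ℂ, MemLp f 2 μ →
        ENNReal.ofReal C * ∫⁻ x, (‖f x‖₊ : ℝ≥0∞) ^ 2 ∂μ ≤
          ∫⁻ x, ⨅ y ∈ Metric.closedBall (0 : Ed d) δ, (‖ftm μ f (x + y)‖₊ : ℝ≥0∞) ^ 2 ∂ν) := by
  obtain ⟨K, hK, hKc⟩ := hμc
  obtain ⟨R, hR⟩ := hK.isBounded.subset_closedBall 0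
  have hM1 : 1 ≤ max R 1 := le_max_right _ _
  set M : ℝ := max R 1 with hMdef
  have hM0 : 0 ≤ M := le_trans zero_le_one hM1
  have hM : ∀ᵐ t ∂μ, ‖t‖ ≤ M := by
    rw [ae_iff]
    refine measure_mono_null (fun t ht => ?_) hKc
    simp only [Set.mem_setOf_eq, not_le] at ht
    intro htK
    have h1 : ‖t‖ ≤ R := by simpa [dist_zero_right] using hR htK
    exact absurd (le_trans h1 (le_max_left R 1)) (not_le.2 ht)
  constructor
  · -- Bessel part
    rintro ⟨B, hBpos, hB⟩ r hr
    set W : ℝ := Real.exp (2 * Real.pi * r * (M * d)) with hWdef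
    have hW0 : 0 < W := Real.exp_pos _
    refine ⟨2 * W * W * B, mul_pos (mul_pos (mul_pos two_pos hW0) hW0) hBpos,
      fun f hf => ?_⟩
    have hfi : Integrable f μ := hf.integrable (by norm_num)
    have hWpart : ∀ N, ∑ n ∈ Finset.range N,
        (M * d) ^ n * ((2 * Real.pi * r) ^ n / n.factorial) ≤ W := by
      intro N
      refine le_trans (le_of_eq (Finset.sum_congr rfl fun n _ => ?_))
        (Real.sum_le_exp_of_nonneg (by positivity) N)
      rw [mul_pow]
      ring
    have hcore := core hB hM1 hM hf hfi (fun n => (2 * Real.pi * r) ^ n / n.factorial)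
      (fun n => by positivity) hWpart
    refine le_trans (lintegral_mono fun x => ?_) (hcore.trans (le_of_eq ?_))
    · refine iSup₂_le fun y hy => ?_
      have hy' : ‖y‖ ≤ r := by rwa [Metric.mem_closedBall, dist_zero_right] at hy
      exact pow_le_pow_left' (pointwise_sup hM0 hM hfi hy' x) 2
    · congr 1
      rw [ENNReal.ofReal_mul (mul_pos (mul_pos two_pos hW0) hW0).le,
        ENNReal.ofReal_mul (mul_pos two_pos hW0).le,
        ENNReal.ofReal_mul (by norm_num : (0:ℝ) ≤ 2), ENNReal.ofReal_ofNat]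
  · -- frame part
    rintro ⟨A, B, hA, hBpos, hFr⟩
    have hB : IsBesselBound μ ν B := fun f hf => (hFr f hf).2
    set c : ℝ := 2 * Real.pi * (M * d) * Real.exp (2 * Real.pi * (M * d)) with hcdef
    have hc0 : 0 ≤ c := by positivity
    set s : ℝ := Real.sqrt (A / (16 * (B + 1) * (c + 1) ^ 2)) with hsdef
    have hs0 : 0 < s := Real.sqrt_pos.2 (by positivity)
    have hδ0 : 0 < min 1 s := lt_min one_pos hs0
    set δ : ℝ := min 1 s with hδdef
    have hδ1 : δ ≤ 1 := min_le_left _ _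
    have hδs : δ ≤ s := min_le_right _ _
    refine ⟨δ, hδ0, A / 6, div_pos hA (by norm_num), fun f hf => ?_⟩
    have hfi : Integrable f μ := hf.integrable (by norm_num)
    have hIfin : ∫⁻ t, (‖f t‖₊ : ℝ≥0∞) ^ 2 ∂μ ≠ ⊤ := lintegral_sq_ne_top hf
    have hρ0 : ∀ n, 0 ≤ rho2 δ n := by
      intro n
      by_cases h : n = 0
      · simp [rho2, h]
      · simp only [rho2, if_neg h]
        positivity
    have hWpart : ∀ N, ∑ n ∈ Finset.range N, (M * d) ^ n * rho2 δ n ≤ δ * c := by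
      intro N
      have key : ∀ n ∈ Finset.range N, (M * d) ^ n * rho2 δ n
          = (if n = 0 then 0 else (2 * Real.pi * δ * (M * d)) ^ n / n.factorial) := by
        intro n _
        by_cases h : n = 0
        · simp [rho2, h]
        · simp only [rho2, if_neg h]
          rw [mul_pow, mul_pow]
          ring
      rw [Finset.sum_congr rfl key]
      refine (sum_range_if_le (by positivity) N).trans ?_
      have hxle : 2 * Real.pi * δ * (M * d) ≤ 2 * Real.pi * (M * d) := by
        have h1 : (0:ℝ) ≤ 2 * Real.pi * (M * d) := by positivity
        nlinarith
      calc 2 * Real.pi * δ * (M * d) * Real.exp (2 * Real.pi * δ * (M * d))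
          ≤ 2 * Real.pi * δ * (M * d) * Real.exp (2 * Real.pi * (M * d)) :=
            mul_le_mul_of_nonneg_left (Real.exp_le_exp.2 hxle) (by positivity)
        _ = δ * c := by rw [hcdef]; ring
    have hcore : ∫⁻ x, (Sfun μ f δ x) ^ 2 ∂ν
        ≤ 2 * ENNReal.ofReal (δ * c) * ENNReal.ofReal (δ * c) * ENNReal.ofReal B
            * ∫⁻ t, (‖f t‖₊ : ℝ≥0∞) ^ 2 ∂μ :=
      core hB hM1 hM hf hfi (rho2 δ) hρ0 hWpart
    have hSmeas : Measurable (Sfun μ f δ) := by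
      refine Measurable.ennreal_tsum fun n => ?_
      refine Measurable.const_mul ?_ _
      refine Finset.measurable_sum _ fun a _ => ?_
      exact (ftm_continuous (gmul_integrable hfi hM0 hM n a)).measurable.nnnorm.coe_nnreal_ennreal
    have hconst : 2 * ENNReal.ofReal (δ * c) * ENNReal.ofReal (δ * c) * ENNReal.ofReal B
        ≤ ENNReal.ofReal (A / 8) := by
      have hW0 : 0 ≤ δ * c := mul_nonneg hδ0.le hc0
      have hreal : 2 * (δ * c) * (δ * c) * B ≤ A / 8 := by
        have hWs : δ * c ≤ s * (c + 1) := by nlinarith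
        have hs2 : s ^ 2 = A / (16 * (B + 1) * (c + 1) ^ 2) := Real.sq_sqrt (by positivity)
        have h2 : 2 * (δ * c) * (δ * c) * B ≤ 2 * (s * (c + 1)) * (s * (c + 1)) * (B + 1) := by
          have hsq : δ * c * (δ * c) ≤ s * (c + 1) * (s * (c + 1)) :=
            mul_le_mul hWs hWs hW0 (le_trans hW0 hWs)
          nlinarith [hsq, hBpos.le, hW0, mul_nonneg hW0 hW0]
        have h3 : 2 * (s * (c + 1)) * (s * (c + 1)) * (B + 1) = A / 8 := by
          have hB1 : (B:ℝ) + 1 ≠ 0 := by positivity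
          have hc1 : (c:ℝ) + 1 ≠ 0 := by positivity
          rw [show 2 * (s * (c + 1)) * (s * (c + 1)) * (B + 1)
            = 2 * s ^ 2 * (c + 1) ^ 2 * (B + 1) from by ring, hs2]
          field_simp
          ring
        linarith
      calc 2 * ENNReal.ofReal (δ * c) * ENNReal.ofReal (δ * c) * ENNReal.ofReal B
          = ENNReal.ofReal (2 * (δ * c) * (δ * c) * B) := by
            rw [ENNReal.ofReal_mul (show (0:ℝ) ≤ 2 * (δ * c) * (δ * c) from by positivity),
              ENNReal.ofReal_mul (show (0:ℝ) ≤ 2 * (δ * c) from by positivity),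
              ENNReal.ofReal_mul (show (0:ℝ) ≤ 2 from by norm_num), ENNReal.ofReal_ofNat]
        _ ≤ _ := ENNReal.ofReal_le_ofReal hreal
    have hpt : ∀ x, (‖ftm μ f x‖₊ : ℝ≥0∞) ^ 2
        ≤ 3 * (⨅ y ∈ Metric.closedBall (0:Ed d) δ, (‖ftm μ f (x + y)‖₊ : ℝ≥0∞) ^ 2)
          + 3 * Sfun μ f δ x ^ 2 := by
      intro x
      have key : ∀ y ∈ Metric.closedBall (0:Ed d) δ, (‖ftm μ f x‖₊ : ℝ≥0∞) ^ 2
          ≤ 3 * (‖ftm μ f (x + y)‖₊ : ℝ≥0∞) ^ 2 + 3 * Sfun μ f δ x ^ 2 := by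
        intro y hy
        have hy' : ‖y‖ ≤ δ := by rwa [Metric.mem_closedBall, dist_zero_right] at hy
        have hre : ‖ftm μ f x‖ ≤ ‖ftm μ f (x + y)‖ + ‖ftm μ f (x + y) - ftm μ f x‖ := by
          have h := norm_sub_le (ftm μ f (x + y)) (ftm μ f (x + y) - ftm μ f x)
          rwa [sub_sub_cancel] at h
        have h1 : (‖ftm μ f x‖₊ : ℝ≥0∞)
            ≤ (‖ftm μ f (x + y)‖₊ : ℝ≥0∞) + (‖ftm μ f (x + y) - ftm μ f x‖₊ : ℝ≥0∞) := by
          rw [← ofReal_norm_eq_coe_nnnorm, ← ofReal_norm_eq_coe_nnnorm,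
            ← ofReal_norm_eq_coe_nnnorm, ← ENNReal.ofReal_add (norm_nonneg _) (norm_nonneg _)]
          exact ENNReal.ofReal_le_ofReal hre
        calc (‖ftm μ f x‖₊ : ℝ≥0∞) ^ 2
            ≤ ((‖ftm μ f (x + y)‖₊ : ℝ≥0∞) + (‖ftm μ f (x + y) - ftm μ f x‖₊ : ℝ≥0∞)) ^ 2 :=
              pow_le_pow_left' h1 2
          _ ≤ 3 * (‖ftm μ f (x + y)‖₊ : ℝ≥0∞) ^ 2
              + 3 * (‖ftm μ f (x + y) - ftm μ f x‖₊ : ℝ≥0∞) ^ 2 := sq_add_le _ _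
          _ ≤ 3 * (‖ftm μ f (x + y)‖₊ : ℝ≥0∞) ^ 2 + 3 * Sfun μ f δ x ^ 2 := by
              gcongr
              exact pointwise_diff hM0 hM hfi hy' x
      have h2 : ((‖ftm μ f x‖₊ : ℝ≥0∞) ^ 2 - 3 * Sfun μ f δ x ^ 2) / 3
          ≤ ⨅ y ∈ Metric.closedBall (0:Ed d) δ, (‖ftm μ f (x + y)‖₊ : ℝ≥0∞) ^ 2 := by
        refine le_iInf₂ fun y hy => ?_
        rw [ENNReal.div_le_iff_le_mul (Or.inl (by norm_num)) (Or.inl (by norm_num))]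
        refine tsub_le_iff_right.2 ?_
        exact le_trans (key y hy) (le_of_eq (by ring))
      have h3 := mul_le_mul_right h2 (3 : ℝ≥0∞)
      rw [ENNReal.mul_div_cancel' (by norm_num) (by norm_num)] at h3
      exact tsub_le_iff_right.1 h3
    have hIr := (hFr f hf).1.trans (lintegral_mono hpt)
    rw [lintegral_add_right _ ((hSmeas.pow_const 2).const_mul 3),
      lintegral_const_mul' 3 _ (by norm_num),
      lintegral_const_mul' 3 _ (by norm_num)] at hIr
    have h4 : ENNReal.ofReal A * ∫⁻ t, (‖f t‖₊ : ℝ≥0∞) ^ 2 ∂μ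
        ≤ 3 * (∫⁻ x, ⨅ y ∈ Metric.closedBall (0:Ed d) δ,
            (‖ftm μ f (x + y)‖₊ : ℝ≥0∞) ^ 2 ∂ν)
          + ENNReal.ofReal (A / 2) * ∫⁻ t, (‖f t‖₊ : ℝ≥0∞) ^ 2 ∂μ := by
      refine hIr.trans (add_le_add le_rfl ?_)
      refine le_trans (mul_le_mul_right (hcore.trans (mul_le_mul_left hconst _)) 3) ?_
      rw [← mul_assoc]
      refine mul_le_mul_left ?_ _
      calc (3:ℝ≥0∞) * ENNReal.ofReal (A / 8)
          = ENNReal.ofReal (3 * (A / 8)) := by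
            rw [ENNReal.ofReal_mul (by norm_num : (0:ℝ) ≤ 3), ENNReal.ofReal_ofNat]
        _ ≤ ENNReal.ofReal (A / 2) := ENNReal.ofReal_le_ofReal (by linarith)
    have h5 : ENNReal.ofReal (A / 2) * ∫⁻ t, (‖f t‖₊ : ℝ≥0∞) ^ 2 ∂μ
          + ENNReal.ofReal (A / 2) * ∫⁻ t, (‖f t‖₊ : ℝ≥0∞) ^ 2 ∂μ
        ≤ 3 * (∫⁻ x, ⨅ y ∈ Metric.closedBall (0:Ed d) δ,
            (‖ftm μ f (x + y)‖₊ : ℝ≥0∞) ^ 2 ∂ν)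
          + ENNReal.ofReal (A / 2) * ∫⁻ t, (‖f t‖₊ : ℝ≥0∞) ^ 2 ∂μ := by
      refine le_trans (le_of_eq ?_) h4
      rw [← add_mul, ← ENNReal.ofReal_add (by linarith) (by linarith), add_halves]
    have h6 := (ENNReal.add_le_add_iff_right
      (ENNReal.mul_ne_top ENNReal.ofReal_ne_top hIfin)).1 h5
    refine (ENNReal.mul_le_mul_iff_right (by norm_num : (3:ℝ≥0∞) ≠ 0) (by norm_num)).1 ?_
    calc (3:ℝ≥0∞) * (ENNReal.ofReal (A / 6) * ∫⁻ t, (‖f t‖₊ : ℝ≥0∞) ^ 2 ∂μ)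
        = ENNReal.ofReal (A / 2) * ∫⁻ t, (‖f t‖₊ : ℝ≥0∞) ^ 2 ∂μ := by
          rw [← mul_assoc, show (3:ℝ≥0∞) * ENNReal.ofReal (A / 6) = ENNReal.ofReal (A / 2) from by
            rw [show (3:ℝ≥0∞) = ENNReal.ofReal 3 from (ENNReal.ofReal_ofNat 3).symm,
              ← ENNReal.ofReal_mul (by norm_num : (0:ℝ) ≤ 3)]
            congr 1
            ring]
      _ ≤ _ := h6
end
end

section
/- Let ν be a locally finite Borel measure on ℝ^d and let ρ be a Borel probability measure on ℝ^d. Then dim(ν∗ρ) = dim ν; that is, the Beurling dimension is invariant under convolution with probability measures. -/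
open MeasureTheory Filter Metric Complex Set
open scoped ENNReal NNReal Real Topology

noncomputable section

lemma cube_measurable {d : ℕ} (x : Ed d) (R : ℝ) : MeasurableSet (cube x R) := by
  have : cube x R = ⋂ i, (fun y : Ed d => y i) ⁻¹' Set.Ico (x i) (x i + R) := by
    ext y; simp [cube]
  rw [this]
  exact MeasurableSet.iInter fun i => (by fun_prop : Continuous fun y : Ed d => y i).measurable measurableSet_Ico

lemma conv_apply' {d : ℕ} (ν ρ : Measure (Ed d)) [SFinite ν] [SFinite ρ]
    {E : Set (Ed d)} (hE : MeasurableSet E) :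
    (ν ∗ ρ) E = ∫⁻ y, ν {x | x + y ∈ E} ∂ρ := by
  unfold Measure.conv
  rw [Measure.map_apply (by fun_prop) hE,
    Measure.prod_apply_symm ((by fun_prop : Measurable fun p : Ed d × Ed d => p.1 + p.2) hE)]
  rfl

lemma shift_cube {d : ℕ} (z y : Ed d) (R : ℝ) :
    {x : Ed d | x + y ∈ cube z R} = cube (z - y) R := by
  ext u
  simp only [cube, Set.mem_setOf_eq, Set.mem_Ico, PiLp.add_apply, PiLp.sub_apply]
  constructor <;> intro h i <;> obtain ⟨h1, h2⟩ := h i <;> constructor <;> linarith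

lemma conv_cube_le {d : ℕ} (ν ρ : Measure (Ed d)) [SFinite ν] [IsProbabilityMeasure ρ]
    (z : Ed d) (R : ℝ) : (ν ∗ ρ) (cube z R) ≤ ⨆ w, ν (cube w R) := by
  rw [conv_apply' ν ρ (cube_measurable z R)]
  calc ∫⁻ y, ν {x | x + y ∈ cube z R} ∂ρ ≤ ∫⁻ _, ⨆ w, ν (cube w R) ∂ρ := by
        refine lintegral_mono fun y => ?_
        rw [shift_cube]; exact le_iSup (fun w => ν (cube w R)) (z - y)
    _ = ⨆ w, ν (cube w R) := by simp

lemma conv_cube_ge {d : ℕ} (ν ρ : Measure (Ed d)) [SFinite ν] [SFinite ρ]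
    (z c : Ed d) (R L : ℝ) :
    ρ (cube c L) * ν (cube z R) ≤ (ν ∗ ρ) (cube (z + c) (R + L)) := by
  rw [conv_apply' ν ρ (cube_measurable _ _)]
  have hsub : ∀ y ∈ cube c L, cube z R ⊆ {x | x + y ∈ cube (z + c) (R + L)} := by
    intro y hy u hu i
    have h1 := hu i; have h2 := hy i
    simp only [Set.mem_Ico] at h1 h2
    simp only [PiLp.add_apply, Set.mem_Ico]
    constructor <;> linarith
  calc ρ (cube c L) * ν (cube z R)
      = ∫⁻ y, (cube c L).indicator (fun _ => ν (cube z R)) y ∂ρ := by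
        rw [lintegral_indicator_const (cube_measurable c L), mul_comm]
    _ ≤ ∫⁻ y, ν {x | x + y ∈ cube (z + c) (R + L)} ∂ρ := by
        refine lintegral_mono fun y => ?_
        by_cases hy : y ∈ cube c L
        · rw [Set.indicator_of_mem hy]; exact measure_mono (hsub y hy)
        · simp [Set.indicator_of_notMem hy]

/-- The Beurling dimension is invariant under convolution with a probability measure:
`dim (ν∗ρ) = dim ν`. -/
theorem stmt11 {d : ℕ} (ν : Measure (Ed d)) [IsLocallyFiniteMeasure ν]
    (ρ : Measure (Ed d)) [IsProbabilityMeasure ρ] :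
    beurlingDim (ν ∗ ρ) = beurlingDim ν := by
  have hA : ∀ α : ℝ, beurlingDensity (ν ∗ ρ) α ≤ beurlingDensity ν α := by
    intro α
    rw [beurlingDensity, beurlingDensity]
    refine Filter.limsup_le_limsup (Eventually.of_forall fun R => ?_)
    refine iSup_le fun z => ?_
    calc (ν ∗ ρ) (cube z R) / ENNReal.ofReal (R ^ α)
        ≤ (⨆ w, ν (cube w R)) / ENNReal.ofReal (R ^ α) :=
          ENNReal.div_le_div_right (conv_cube_le ν ρ z R) _
      _ = ⨆ w, ν (cube w R) / ENNReal.ofReal (R ^ α) := ENNReal.iSup_div _ _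
  have hex : ∃ n : ℕ, 0 < ρ (cube (WithLp.toLp 2 (fun _ => -((n:ℝ)+1)) : Ed d) (2*((n:ℝ)+1))) := by
    by_contra h
    push_neg at h
    have h0 : ∀ n : ℕ, ρ (cube (WithLp.toLp 2 (fun _ => -((n:ℝ)+1)) : Ed d) (2*((n:ℝ)+1))) = 0 :=
      fun n => le_antisymm (h n) zero_le
    have hu : (⋃ n : ℕ, cube (WithLp.toLp 2 (fun _ => -((n:ℝ)+1)) : Ed d) (2*((n:ℝ)+1))) = univ := by
      ext y
      simp only [mem_iUnion, mem_univ, iff_true]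
      obtain ⟨n, hn⟩ := exists_nat_gt (∑ i, |y i|)
      refine ⟨n, fun i => ?_⟩
      have hle : |y i| ≤ ∑ j, |y j| :=
        Finset.single_le_sum (fun j _ => abs_nonneg (y j)) (Finset.mem_univ i)
      have habs : |y i| < (n:ℝ) + 1 := by linarith
      rw [abs_lt] at habs
      simp only [Set.mem_Ico, PiLp.toLp_apply]
      constructor <;> linarith [habs.1, habs.2]
    have h1 := measure_iUnion_null h0
    rw [hu, measure_univ] at h1
    exact one_ne_zero h1
  obtain ⟨n, hn⟩ := hex
  set L : ℝ := 2*((n:ℝ)+1) with hLdef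
  set c : Ed d := (WithLp.toLp 2 (fun _ => -((n:ℝ)+1))) with hcdef
  have hL : 0 < L := by positivity
  have hB : ∀ α : ℝ, 0 ≤ α → beurlingDensity ν α = ∞ → beurlingDensity (ν ∗ ρ) α = ∞ := by
    intro α hα htop
    set A : ℝ≥0∞ := ENNReal.ofReal (2 ^ α) with hAdef
    have hA0 : A ≠ 0 := (ENNReal.ofReal_pos.2 (Real.rpow_pos_of_pos two_pos α)).ne'
    have hAT : A ≠ ∞ := ENNReal.ofReal_ne_top
    set ε : ℝ≥0∞ := ρ (cube c L) with hεdef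
    have hε0 : ε ≠ 0 := hn.ne'
    have hεT : ε ≠ ∞ := measure_ne_top ρ _
    set k : ℝ≥0∞ := ε * A⁻¹ with hkdef
    have hk0 : k ≠ 0 := mul_ne_zero hε0 (ENNReal.inv_ne_zero.2 hAT)
    have hkT : k ≠ ∞ := ENNReal.mul_ne_top hεT (ENNReal.inv_ne_top.2 hA0)
    have key : ∀ R : ℝ, max L 1 ≤ R →
        k * (⨆ z, ν (cube z R) / ENNReal.ofReal (R ^ α))
          ≤ ⨆ x, (ν ∗ ρ) (cube x (R+L)) / ENNReal.ofReal ((R+L) ^ α) := by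
      intro R hR
      have hR1 : (1:ℝ) ≤ R := le_trans (le_max_right _ _) hR
      have hRL : L ≤ R := le_trans (le_max_left _ _) hR
      have hden : ENNReal.ofReal ((R+L) ^ α) ≤ A * ENNReal.ofReal (R ^ α) := by
        rw [hAdef, ← ENNReal.ofReal_mul (Real.rpow_nonneg (by norm_num) α),
          ← Real.mul_rpow (by norm_num) (by linarith)]
        exact ENNReal.ofReal_le_ofReal (Real.rpow_le_rpow (by linarith) (by linarith) hα)
      rw [ENNReal.mul_iSup]
      refine iSup_le fun z => ?_
      have h1 : k * (ν (cube z R) / ENNReal.ofReal (R ^ α))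
          = ε * ν (cube z R) / (A * ENNReal.ofReal (R ^ α)) := by
        rw [div_eq_mul_inv, div_eq_mul_inv, ENNReal.mul_inv (Or.inl hA0) (Or.inl hAT), hkdef]
        ring
      rw [h1]
      calc ε * ν (cube z R) / (A * ENNReal.ofReal (R ^ α))
          ≤ ε * ν (cube z R) / ENNReal.ofReal ((R+L) ^ α) :=
            ENNReal.div_le_div_left hden _
        _ ≤ (ν ∗ ρ) (cube (z + c) (R+L)) / ENNReal.ofReal ((R+L) ^ α) :=
            ENNReal.div_le_div_right (conv_cube_ge ν ρ z c R L) _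
        _ ≤ ⨆ x, (ν ∗ ρ) (cube x (R+L)) / ENNReal.ofReal ((R+L) ^ α) :=
            le_iSup (fun x : Ed d => (ν ∗ ρ) (cube x (R+L)) / ENNReal.ofReal ((R+L) ^ α)) (z + c)
    rw [beurlingDensity, Filter.limsup_eq]
    refine top_unique (le_sInf fun a ha => top_le_iff.2 ?_)
    by_contra haT
    obtain ⟨S₀, hS₀⟩ := eventually_atTop.1 ha
    have hFle : ∀ᶠ R in atTop,
        (⨆ x : Ed d, ν (cube x R) / ENNReal.ofReal (R ^ α)) ≤ a / k := by
      filter_upwards [eventually_ge_atTop (max (max L 1) S₀)] with R hR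
      have h2 : (⨆ x : Ed d, (ν ∗ ρ) (cube x (R+L)) / ENNReal.ofReal ((R+L) ^ α)) ≤ a := by
        apply hS₀
        have : S₀ ≤ R := le_trans (le_max_right _ _) hR
        linarith
      refine (ENNReal.le_div_iff_mul_le (Or.inl hk0) (Or.inl hkT)).2 ?_
      rw [mul_comm]
      exact le_trans (key R (le_trans (le_max_left _ _) hR)) h2
    have hlim : beurlingDensity ν α ≤ a / k := Filter.limsup_le_of_le (h := hFle)
    rw [htop, top_le_iff] at hlim
    have hne : a / k ≠ ⊤ := by
      rw [div_eq_mul_inv]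
      exact ENNReal.mul_ne_top haT (ENNReal.inv_ne_top.2 hk0)
    exact hne hlim
  refine le_antisymm ?_ ?_ <;>
    refine iSup_le fun α => iSup_le fun hα => iSup_le fun hD => ?_
  · have hDν : beurlingDensity ν α = ∞ := top_unique (hD ▸ hA α)
    exact le_iSup_of_le α (le_iSup_of_le hα (le_iSup_of_le hDν le_rfl))
  · exact le_iSup_of_le α (le_iSup_of_le hα (le_iSup_of_le (hB α hα hD) le_rfl))
end
end

section
/- If ν is a Bessel measure for a Borel probability measure μ on ℝ^d, then the Beurling dimension of ν satisfies dim ν ≤ d. -/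
open MeasureTheory Filter Metric Complex Set
open scoped ENNReal NNReal Real Topology

noncomputable section

lemma norm_exp_aux (r : ℝ) : ‖Complex.exp ((r:ℂ) * Complex.I)‖ = 1 := by
  simpa using Complex.norm_exp_ofReal_mul_I r

lemma key_exp {d : ℕ} (t x : Ed d) :
    Complex.exp (-(2 * Real.pi * (inner ℝ t x : ℝ)) * Complex.I)
      = Complex.exp (((-(2 * Real.pi * (inner ℝ t x : ℝ)) : ℝ) : ℂ) * Complex.I) := by
  push_cast; ring_nf

lemma exp_cont2 {d : ℕ} (x : Ed d) :
    Continuous (fun u : Ed d => Complex.exp (-(2 * Real.pi * (inner ℝ u x : ℝ)) * Complex.I)) := by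
  apply Complex.continuous_exp.comp
  apply Continuous.mul _ continuous_const
  apply Continuous.neg
  exact (continuous_const.mul (Complex.continuous_ofReal.comp
    (continuous_id.inner continuous_const)))

lemma exp_cont1 {d : ℕ} (u : Ed d) :
    Continuous (fun x : Ed d => Complex.exp (-(2 * Real.pi * (inner ℝ u x : ℝ)) * Complex.I)) := by
  apply Complex.continuous_exp.comp
  apply Continuous.mul _ continuous_const
  apply Continuous.neg
  exact (continuous_const.mul (Complex.continuous_ofReal.comp
    (continuous_const.inner continuous_id)))

lemma hat_continuous {d : ℕ} (μ : Measure (Ed d)) [IsFiniteMeasure μ] :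
    Continuous (fun u : Ed d => ftm μ (fun _ => 1) u) := by
  apply continuous_of_dominated (bound := fun _ => (1:ℝ))
  · intro u
    exact ((continuous_const.mul (exp_cont1 u))).aestronglyMeasurable
  · intro u
    filter_upwards with x
    rw [one_mul, key_exp, norm_exp_aux]
  · exact integrable_const 1
  · filter_upwards with x
    simpa only [one_mul] using exp_cont2 x

/-- the modulation -/
def modf {d : ℕ} (s : Ed d) (y : Ed d) : ℂ :=
  Complex.exp (((2 * Real.pi * (inner ℝ s y : ℝ) : ℝ) : ℂ) * Complex.I)

lemma norm_modf {d : ℕ} (s y : Ed d) : ‖modf s y‖ = 1 := by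
  rw [modf, Complex.norm_exp_ofReal_mul_I]

lemma modf_cont {d : ℕ} (s : Ed d) : Continuous (modf s) := by
  apply Complex.continuous_exp.comp
  exact (Complex.continuous_ofReal.comp
    (continuous_const.mul (continuous_const.inner continuous_id))).mul continuous_const

lemma modf_memLp {d : ℕ} (s : Ed d) (μ : Measure (Ed d)) [IsFiniteMeasure μ] :
    MemLp (modf s) 2 μ := by
  apply MemLp.of_bound (modf_cont s).aestronglyMeasurable 1
  filter_upwards with y using le_of_eq (norm_modf s y)

lemma ftm_modf {d : ℕ} (μ : Measure (Ed d)) (s t : Ed d) :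
    ftm μ (modf s) t = ftm μ (fun _ => 1) (t - s) := by
  unfold ftm modf
  congr 1
  funext x
  rw [one_mul, ← Complex.exp_add]
  congr 1
  have : (inner ℝ (t - s) x : ℝ) = (inner ℝ t x : ℝ) - (inner ℝ s x : ℝ) := inner_sub_left _ _ _
  rw [this]
  push_cast
  ring

lemma lint_modf {d : ℕ} (s : Ed d) (μ : Measure (Ed d)) [IsProbabilityMeasure μ] :
    ∫⁻ x, (‖modf s x‖₊ : ℝ≥0∞) ^ 2 ∂μ = 1 := by
  have : ∀ x, (‖modf s x‖₊ : ℝ≥0∞) ^ 2 = 1 := by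
    intro x
    have h : ‖modf s x‖₊ = 1 := NNReal.coe_injective (by rw [coe_nnnorm, norm_modf, NNReal.coe_one])
    simp [h]
  simp only [this, lintegral_one, measure_univ]

lemma hat_zero {d : ℕ} (μ : Measure (Ed d)) [IsProbabilityMeasure μ] :
    ftm μ (fun _ => 1) 0 = 1 := by
  unfold ftm
  have : ∀ x : Ed d, (1 : ℂ) * Complex.exp (-(2 * Real.pi * (inner ℝ (0 : Ed d) x : ℝ)) * Complex.I) = 1 := by
    intro x
    simp
  simp only [this, integral_const, measure_univ, probReal_univ, one_smul]

lemma cube_subset_ball {d : ℕ} (x : Ed d) (δ : ℝ) (hδ : 0 < δ) :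
    cube x (δ / (d + 1)) ⊆ Metric.ball x δ := by
  intro y hy
  set r0 : ℝ := δ / (d + 1) with hr0
  have hr0pos : 0 < r0 := by positivity
  rw [Metric.mem_ball, EuclideanSpace.dist_eq]
  have hterm : ∀ i : Fin d, dist (y i) (x i) ^ 2 ≤ r0 ^ 2 := by
    intro i
    obtain ⟨h1, h2⟩ := hy i
    rw [Real.dist_eq, _root_.abs_of_nonneg (by linarith)]
    nlinarith
  have hsum : ∑ i : Fin d, dist (y i) (x i) ^ 2 ≤ d * r0 ^ 2 := by
    calc ∑ i : Fin d, dist (y i) (x i) ^ 2 ≤ ∑ _i : Fin d, r0 ^ 2 :=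
          Finset.sum_le_sum fun i _ => hterm i
      _ = d * r0 ^ 2 := by simp [Finset.sum_const, mul_comm]
  have hlt : d * r0 ^ 2 < δ ^ 2 := by
    rw [hr0, div_pow]
    have hd : (0:ℝ) ≤ d := Nat.cast_nonneg d
    rw [mul_div_assoc'] at *
    rw [div_lt_iff₀ (by positivity)]
    have hδ2 : 0 < δ^2 := by positivity
    nlinarith [sq_nonneg ((d:ℝ)*δ), mul_nonneg hd hδ2.le]
  calc √(∑ i : Fin d, dist (y i) (x i) ^ 2) ≤ √(d * r0 ^ 2) := Real.sqrt_le_sqrt hsum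
    _ < √(δ ^ 2) := by
        apply Real.sqrt_lt_sqrt (by positivity) hlt
    _ = δ := by rw [Real.sqrt_sq hδ.le]

lemma cube_cover {d : ℕ} (x : Ed d) (R r0 : ℝ) (hr0 : 0 < r0) :
    cube x R ⊆ ⋃ k : Fin d → Fin (Nat.ceil (R / r0)),
      cube ((WithLp.equiv 2 (Fin d → ℝ)).symm (fun i => x i + (k i : ℝ) * r0)) r0 := by
  intro y hy
  have hR : ∀ i, x i ≤ y i ∧ y i < x i + R := fun i => hy i
  have hkey : ∀ i : Fin d, (⌊(y i - x i) / r0⌋₊ : ℕ) < Nat.ceil (R / r0) := by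
    intro i
    rw [Nat.lt_ceil]
    calc (⌊(y i - x i) / r0⌋₊ : ℝ) ≤ (y i - x i) / r0 :=
          Nat.floor_le (div_nonneg (by linarith [(hR i).1]) hr0.le)
      _ < R / r0 := by
          gcongr
          linarith [(hR i).2]
  refine Set.mem_iUnion.mpr ⟨fun i => ⟨⌊(y i - x i) / r0⌋₊, hkey i⟩, ?_⟩
  intro i
  simp only [WithLp.equiv_symm_apply, PiLp.toLp_apply]
  constructor
  · have := Nat.floor_le (a := (y i - x i) / r0)
      (div_nonneg (by linarith [(hR i).1]) hr0.le)
    have h2 : (⌊(y i - x i) / r0⌋₊ : ℝ) * r0 ≤ y i - x i := by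
      rw [← le_div_iff₀ hr0]; exact this
    linarith
  · have := Nat.lt_floor_add_one ((y i - x i) / r0)
    have h2 : y i - x i < ((⌊(y i - x i) / r0⌋₊ : ℝ) + 1) * r0 := by
      rw [← div_lt_iff₀ hr0]; exact this
    linarith

lemma cube_measure_le {d : ℕ} (ν : Measure (Ed d)) (r0 : ℝ) (M : ℝ≥0∞) (hr0 : 0 < r0)
    (hsmall : ∀ c : Ed d, ν (cube c r0) ≤ M) (x : Ed d) (R : ℝ) :
    ν (cube x R) ≤ ((Nat.ceil (R / r0) : ℝ≥0∞)) ^ d * M := by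
  set n := Nat.ceil (R / r0)
  calc ν (cube x R) ≤ ν (⋃ k : Fin d → Fin n,
        cube ((WithLp.equiv 2 (Fin d → ℝ)).symm (fun i => x i + (k i : ℝ) * r0)) r0) :=
        measure_mono (cube_cover x R r0 hr0)
    _ ≤ ∑ k : Fin d → Fin n,
        ν (cube ((WithLp.equiv 2 (Fin d → ℝ)).symm (fun i => x i + (k i : ℝ) * r0)) r0) :=
        measure_iUnion_fintype_le _ _
    _ ≤ ∑ _k : Fin d → Fin n, M := Finset.sum_le_sum fun k _ => hsmall _
    _ = (Fintype.card (Fin d → Fin n)) * M := by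
        rw [Finset.sum_const, Finset.card_univ, nsmul_eq_mul]
    _ = ((n : ℝ≥0∞)) ^ d * M := by
        rw [Fintype.card_fun, Fintype.card_fin, Fintype.card_fin]
        push_cast
        ring

lemma density_lt_top {d : ℕ} (ν : Measure (Ed d)) (r0 : ℝ) (M : ℝ≥0∞) (hr0 : 0 < r0)
    (hM : M ≠ ∞) (hsmall : ∀ c : Ed d, ν (cube c r0) ≤ M) (α : ℝ) (hα : (d : ℝ) ≤ α) :
    beurlingDensity ν α ≠ ∞ := by
  set c1 : ℝ := 1 / r0 + 1 with hc1
  have hc1pos : 0 < c1 := by positivity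
  set K : ℝ≥0∞ := ENNReal.ofReal (c1 ^ d) * M with hK
  have hKlt : K < ∞ := ENNReal.mul_lt_top ENNReal.ofReal_lt_top hM.lt_top
  have hev : ∀ᶠ R : ℝ in atTop,
      (⨆ x : Ed d, ν (cube x R) / ENNReal.ofReal (R ^ α)) ≤ K := by
    filter_upwards [eventually_ge_atTop (1:ℝ)] with R hR
    apply iSup_le
    intro x
    have hRpos : (0:ℝ) < R := lt_of_lt_of_le one_pos hR
    -- ceil bound
    have hceil : ((Nat.ceil (R / r0) : ℝ)) ≤ c1 * R := by
      have h1 : (Nat.ceil (R / r0) : ℝ) < R / r0 + 1 :=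
        Nat.ceil_lt_add_one (by positivity)
      have : R / r0 + 1 ≤ c1 * R := by
        rw [hc1]
        have : R / r0 = (1/r0) * R := by ring
        rw [this]
        nlinarith [hr0]
      linarith
    have hpow : ((Nat.ceil (R / r0) : ℝ≥0∞)) ^ d ≤ ENNReal.ofReal ((c1 * R) ^ d) := by
      rw [← ENNReal.ofReal_natCast, ← ENNReal.ofReal_pow (by positivity)]
      exact ENNReal.ofReal_le_ofReal (pow_le_pow_left₀ (by positivity) hceil d)
    have hcube : ν (cube x R) ≤ K * ENNReal.ofReal (R ^ α) := by
      calc ν (cube x R) ≤ ((Nat.ceil (R / r0) : ℝ≥0∞)) ^ d * M :=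
            cube_measure_le ν r0 M hr0 hsmall x R
        _ ≤ ENNReal.ofReal ((c1 * R) ^ d) * M := mul_le_mul_left hpow M
        _ = ENNReal.ofReal (c1 ^ d) * ENNReal.ofReal (R ^ d) * M := by
            rw [mul_pow, ENNReal.ofReal_mul (by positivity)]
        _ ≤ ENNReal.ofReal (c1 ^ d) * ENNReal.ofReal (R ^ α) * M := by
            apply mul_le_mul_left
            apply mul_le_mul_right
            apply ENNReal.ofReal_le_ofReal
            rw [← Real.rpow_natCast R d]
            exact Real.rpow_le_rpow_of_exponent_le hR hα
        _ = K * ENNReal.ofReal (R ^ α) := by rw [hK]; ring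
    rw [ENNReal.div_le_iff (by
        simp only [ne_eq, ENNReal.ofReal_eq_zero, not_le]
        positivity) ENNReal.ofReal_ne_top]
    exact hcube
  have := limsup_le_of_le (by isBoundedDefault) hev
  exact ne_top_of_le_ne_top hKlt.ne this

lemma ball_bound {d : ℕ} (ν : Measure (Ed d)) (B : ℝ)
    (hat : Ed d → ℂ) (hc : Continuous hat) (h0 : hat 0 = 1)
    (hB : ∀ s : Ed d, ∫⁻ t, (‖hat (t - s)‖₊ : ℝ≥0∞) ^ 2 ∂ν ≤ ENNReal.ofReal B) :
    ∃ δ : ℝ, 0 < δ ∧ ∀ s : Ed d, ν (Metric.ball s δ) ≤ 4 * ENNReal.ofReal B := by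
  -- find δ with ‖hat u‖ ≥ 1/2 on ball 0 δ
  have hc0 : ContinuousAt hat 0 := hc.continuousAt
  have h2 : ∀ᶠ u in 𝓝 (0 : Ed d), ‖hat u - 1‖ < 1/2 := by
    have := hc0.tendsto
    rw [h0] at this
    have := Metric.tendsto_nhds.mp this (1/2) (by norm_num)
    simpa [dist_eq_norm] using this
  rcases Metric.eventually_nhds_iff_ball.mp h2 with ⟨δ, hδ, hball⟩
  refine ⟨δ, hδ, fun s => ?_⟩
  have key : ∀ t, t ∈ Metric.ball s δ → (4 : ℝ≥0∞)⁻¹ ≤ (‖hat (t - s)‖₊ : ℝ≥0∞) ^ 2 := by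
    intro t ht
    have hts : t - s ∈ Metric.ball (0 : Ed d) δ := by
      simpa [Metric.mem_ball, dist_eq_norm] using Metric.mem_ball.mp ht
    have h1 : (1:ℝ)/2 ≤ ‖hat (t - s)‖ := by
      have := hball _ hts
      have := norm_sub_norm_le (1 : ℂ) (1 - hat (t-s))
      have h3 : ‖(1:ℂ) - (1 - hat (t - s))‖ = ‖hat (t-s)‖ := by ring_nf
      have h4 : ‖(1:ℂ) - hat (t-s)‖ < 1/2 := by
        rw [norm_sub_rev]; exact hball _ hts
      nlinarith [norm_sub_norm_le (1:ℂ) (1 - hat (t-s)), norm_one (α := ℂ),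
        norm_sub_rev (hat (t-s)) (1:ℂ)]
    have h5 : ((1:ℝ≥0)/2) ≤ ‖hat (t-s)‖₊ := by
      rw [← NNReal.coe_le_coe]
      simpa [coe_nnnorm] using h1
    have h6 : ((1:ℝ≥0)/2)^2 ≤ ‖hat (t-s)‖₊ ^ 2 := pow_le_pow_left' h5 2
    have h7 : (((1:ℝ≥0)/2)^2 : ℝ≥0) = (4:ℝ≥0)⁻¹ := by norm_num
    rw [h7] at h6
    calc (4 : ℝ≥0∞)⁻¹ = (((4:ℝ≥0)⁻¹ : ℝ≥0) : ℝ≥0∞) := by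
          rw [ENNReal.coe_inv (by norm_num)]; norm_num
      _ ≤ (‖hat (t-s)‖₊ : ℝ≥0∞) ^ 2 := by
          rw [← ENNReal.coe_pow]; exact ENNReal.coe_le_coe.mpr h6
  have step : (4 : ℝ≥0∞)⁻¹ * ν (Metric.ball s δ) ≤ ENNReal.ofReal B := by
    calc (4 : ℝ≥0∞)⁻¹ * ν (Metric.ball s δ)
        = ∫⁻ t in Metric.ball s δ, (4 : ℝ≥0∞)⁻¹ ∂ν := by rw [setLIntegral_const, mul_comm]
      _ ≤ ∫⁻ t in Metric.ball s δ, (‖hat (t - s)‖₊ : ℝ≥0∞) ^ 2 ∂ν := by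
          apply setLIntegral_mono' measurableSet_ball key
      _ ≤ ∫⁻ t, (‖hat (t - s)‖₊ : ℝ≥0∞) ^ 2 ∂ν := setLIntegral_le_lintegral _ _
      _ ≤ ENNReal.ofReal B := hB s
  calc ν (Metric.ball s δ) = 4 * ((4 : ℝ≥0∞)⁻¹ * ν (Metric.ball s δ)) := by
        rw [← mul_assoc, ENNReal.mul_inv_cancel (by norm_num) (by norm_num), one_mul]
    _ ≤ 4 * ENNReal.ofReal B := by exact mul_le_mul_right step 4

/-- If `ν` is a Bessel measure for a Borel probability measure `μ` on `ℝ^d`, then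
`dim ν ≤ d`. -/
theorem stmt13 {d : ℕ} (μ ν : Measure (Ed d)) [IsProbabilityMeasure μ]
    (B : ℝ) (hB : 0 < B) (hν : IsBesselBound μ ν B) :
    beurlingDim ν ≤ (d : ℝ≥0∞) := by
  -- Bessel bound applied to modulations gives a uniform bound on balls
  have hB' : ∀ s : Ed d, ∫⁻ t, (‖(fun u => ftm μ (fun _ => 1) u) (t - s)‖₊ : ℝ≥0∞) ^ 2 ∂ν
      ≤ ENNReal.ofReal B := by
    intro s
    have h1 := hν (modf s) (modf_memLp s μ)
    rw [lint_modf, mul_one] at h1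
    refine le_trans (le_of_eq ?_) h1
    congr 1
    funext t
    rw [ftm_modf]
  obtain ⟨δ, hδ, hball⟩ := ball_bound ν B _ (hat_continuous μ) (hat_zero μ) hB'
  set M : ℝ≥0∞ := 4 * ENNReal.ofReal B with hM
  have hMne : M ≠ ∞ := by
    rw [hM]
    exact ENNReal.mul_ne_top (by norm_num) ENNReal.ofReal_ne_top
  set r0 : ℝ := δ / (d + 1) with hr0
  have hr0pos : 0 < r0 := by positivity
  have hsmall : ∀ c : Ed d, ν (cube c r0) ≤ M := fun c =>
    le_trans (measure_mono (cube_subset_ball c δ hδ)) (hball c)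
  -- conclude
  apply iSup_le; intro α
  apply iSup_le; intro hα
  apply iSup_le; intro hdens
  by_contra hcon
  push_neg at hcon
  have hdα : (d : ℝ) < α := by
    rw [show ((d : ℝ≥0∞)) = ENNReal.ofReal (d : ℝ) by rw [ENNReal.ofReal_natCast]] at hcon
    exact (ENNReal.ofReal_lt_ofReal_iff_of_nonneg (Nat.cast_nonneg d)).mp hcon
  exact density_lt_top ν r0 M hr0pos hMne hsmall α hdα.le hdens
end
end
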